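/- arXiv:1609.04744 — 3 statements merged into one kernel-verified Lean document; each statement's English description precedes it below -/
import Mathlib

section
/- Let α : P(E) → (−∞,∞] be a proper convex function with weakly compact sub-level sets and ρ(g) = sup_{ν ∈ P(E)} (∫ g dν − α(ν)) for measurable extended-real g (with the convention ∞ − ∞ := −∞ for integrals). If f : E → ℝ ∪ {∞} is measurable and bounded from below, then ρ(f) = lim_{m→∞} ρ(f ∧ m) = sup_{m > 0} ρ(f ∧ m). -/
open MeasureTheory ProbabilityTheory Filter Topology Set
open scoped ENNReal NNReal

noncomputable section

namespace SanovDual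

attribute [local instance] Classical.propDecidable

/-- The integral of an `EReal`-valued function, with the convention `∞ - ∞ := -∞`. -/
def erealIntegral {X : Type*} [MeasurableSpace X] (μ : Measure X) (f : X → EReal) : EReal :=
  if (∫⁻ x, (if f x = ⊥ then ⊤ else ENNReal.ofReal (-(f x).toReal)) ∂μ) = ⊤ then ⊥
  else ((∫⁻ x, (if f x = ⊤ then ⊤ else ENNReal.ofReal ((f x).toReal)) ∂μ : ℝ≥0∞) : EReal)
      - ((∫⁻ x, (if f x = ⊥ then ⊤ else ENNReal.ofReal (-(f x).toReal)) ∂μ : ℝ≥0∞) : EReal)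

/-- Extension of a function on probability measures to all measures (value `∞` elsewhere). -/
def extend {E : Type*} [MeasurableSpace E] (α : ProbabilityMeasure E → EReal)
    (μ : Measure E) : EReal :=
  if h : IsProbabilityMeasure μ then α ⟨μ, h⟩ else ⊤

/-- The conditional law of the `k`-th coordinate given the first `k` coordinates (`0`-indexed:
given coordinates `0, …, k-1`), under a probability measure on `Fin n → E`. -/
def condLaw {E : Type*} [MeasurableSpace E] [TopologicalSpace E] [PolishSpace E] [BorelSpace E]
    [Nonempty E] (n : ℕ) (ν : ProbabilityMeasure (Fin n → E)) (k : Fin n) :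
    Kernel (Fin (k : ℕ) → E) E :=
  Measure.condKernel ((ν : Measure (Fin n → E)).map
      (fun x => ((fun i : Fin (k : ℕ) => x (Fin.castLE k.isLt.le i)), x k)))

/-- The functional `α_n` on `P(E^n)` built from `α` by summing `α` applied to the successive
conditional laws in the disintegration. -/
def alphan {E : Type*} [MeasurableSpace E] [TopologicalSpace E] [PolishSpace E] [BorelSpace E]
    [Nonempty E] (α : ProbabilityMeasure E → EReal) (n : ℕ)
    (ν : ProbabilityMeasure (Fin n → E)) : EReal :=
  ∑ k : Fin n, erealIntegral (ν : Measure (Fin n → E))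
    (fun x => extend α (condLaw n ν k (fun i => x (Fin.castLE k.isLt.le i))))

/-- The convex conjugate `ρ_n` of `α_n`, acting on (extended-real-valued) functions on `E^n`. -/
def rhon {E : Type*} [MeasurableSpace E] [TopologicalSpace E] [PolishSpace E] [BorelSpace E]
    [Nonempty E] (α : ProbabilityMeasure E → EReal) (n : ℕ) (f : (Fin n → E) → EReal) : EReal :=
  ⨆ ν : ProbabilityMeasure (Fin n → E), erealIntegral (ν : Measure (Fin n → E)) f - alphan α n ν

/-- `ρ = ρ₁` on bounded (real-valued) functions. -/
def rho {E : Type*} [MeasurableSpace E] (α : ProbabilityMeasure E → EReal) (f : E → ℝ) : EReal :=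
  ⨆ ν : ProbabilityMeasure E, ((∫ x, f x ∂(ν : Measure E) : ℝ) : EReal) - α ν

/-- `ρ` on extended-real-valued functions, with the convention `∞ - ∞ := -∞` for integrals. -/
def rhoE {E : Type*} [MeasurableSpace E] (α : ProbabilityMeasure E → EReal) (f : E → EReal) :
    EReal :=
  ⨆ ν : ProbabilityMeasure E, erealIntegral (ν : Measure E) f - α ν

/-- `ρ` on `[0,∞]`-valued functions. -/
def rhoNN {E : Type*} [MeasurableSpace E] (α : ProbabilityMeasure E → EReal) (g : E → ℝ≥0∞) :
    EReal :=
  ⨆ ν : ProbabilityMeasure E, ((∫⁻ x, g x ∂(ν : Measure E) : ℝ≥0∞) : EReal) - α ν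

/-- The empirical measure `L_n(x) = n⁻¹ ∑ δ_{x_i}` as a measure. -/
def empMeasure {E : Type*} [MeasurableSpace E] (n : ℕ) (x : Fin n → E) : Measure E :=
  (n : ℝ≥0∞)⁻¹ • ∑ i : Fin n, Measure.dirac (x i)

/-- The empirical measure `L_n(x)` as a probability measure (junk value for `n = 0`). -/
def empirical {E : Type*} [MeasurableSpace E] [Nonempty E] (n : ℕ) (x : Fin n → E) :
    ProbabilityMeasure E :=
  if h : IsProbabilityMeasure (empMeasure n x) then ⟨empMeasure n x, h⟩
  else ⟨Measure.dirac (Classical.arbitrary E), inferInstance⟩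

/-- `P_ψ(E)`, the probability measures integrating `ψ`. -/
def Pw (E : Type*) [MeasurableSpace E] (ψ : E → ℝ) : Type _ :=
  {ν : ProbabilityMeasure E // ∫⁻ x, ENNReal.ofReal (ψ x) ∂(ν : Measure E) ≠ ⊤}

/-- The underlying probability measure of an element of `P_ψ(E)`. -/
def Pw.toProb {E : Type*} [MeasurableSpace E] {ψ : E → ℝ} (ν : Pw E ψ) :
    ProbabilityMeasure E :=
  Subtype.val ν

/-- The `ψ`-weak topology on `P_ψ(E)`: the topology generated by the maps `ν ↦ ∫ f dν` over
continuous `f : E → ℝ` with `|f| ≤ 1 + ψ`. -/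
instance {E : Type*} [MeasurableSpace E] [TopologicalSpace E] (ψ : E → ℝ) :
    TopologicalSpace (Pw E ψ) :=
  ⨅ (f : E → ℝ) (_ : Continuous f) (_ : ∀ x, |f x| ≤ 1 + ψ x),
    TopologicalSpace.induced (fun ν : Pw E ψ => ∫ x, f x ∂(ν.toProb : Measure E)) inferInstance

/-- Lift a function on `P_ψ(E)` to one on `P(E)` (junk value `⊤` off `P_ψ(E)`). -/
def liftPw {E : Type*} [MeasurableSpace E] (ψ : E → ℝ) (F : Pw E ψ → EReal)
    (ν : ProbabilityMeasure E) : EReal :=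
  if h : ∫⁻ x, ENNReal.ofReal (ψ x) ∂(ν : Measure E) ≠ ⊤ then F ⟨ν, h⟩ else ⊤

/-- The canonical map `EReal → ℝ≥0∞`. -/
def erealToENNReal (x : EReal) : ℝ≥0∞ :=
  if x = ⊤ then ⊤ else ENNReal.ofReal x.toReal

instance {E : Type*} [MeasurableSpace E] : MeasurableSpace (ProbabilityMeasure E) :=
  Subtype.instMeasurableSpace

section Helpers

lemma toENN_mono : Monotone erealToENNReal := by
  intro a b hab
  rcases eq_or_ne b ⊤ with hb | hb
  · simp [erealToENNReal, hb]
  · have ha : a ≠ ⊤ := fun h => hb (top_le_iff.mp (h ▸ hab))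
    rcases eq_or_ne a ⊥ with h0 | h0
    · simp [erealToENNReal, h0, if_neg ha, if_neg hb]
    · simp only [erealToENNReal, if_neg ha, if_neg hb]
      exact ENNReal.ofReal_le_ofReal (EReal.toReal_le_toReal hab h0 hb)

lemma toENN_of_nonpos {a : EReal} (h : a ≤ 0) : erealToENNReal a = 0 := by
  have ha : a ≠ ⊤ := by rintro rfl; simp at h
  rw [erealToENNReal, if_neg ha, ENNReal.ofReal_eq_zero]
  rcases eq_or_ne a ⊥ with h0 | h0
  · simp [h0]
  · simpa using EReal.toReal_le_toReal h h0 (by simp)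

lemma measurable_toENN : Measurable erealToENNReal := by
  unfold erealToENNReal
  apply Measurable.ite
  · exact MeasurableSet.preimage (measurableSet_singleton ⊤) measurable_id
  · exact measurable_const
  · exact ENNReal.measurable_ofReal.comp measurable_ereal_toReal

lemma negInt_eq (a : EReal) :
    (if a = ⊥ then (⊤:ℝ≥0∞) else ENNReal.ofReal (-(a.toReal))) = erealToENNReal (-a) := by
  rcases eq_or_ne a ⊥ with h | h
  · simp [h, erealToENNReal]
  · rw [if_neg h, erealToENNReal, if_neg (by simpa [EReal.neg_eq_top_iff] using h),
      EReal.toReal_neg_eq]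

lemma coe_iSup_ennreal {a : ℕ → ℝ≥0∞} (h : Monotone a) :
    ((⨆ n, a n : ℝ≥0∞) : EReal) = ⨆ n, (a n : EReal) :=
  tendsto_nhds_unique
    ((continuous_coe_ennreal_ereal.tendsto _).comp (tendsto_atTop_iSup h))
    (tendsto_atTop_iSup (fun _ _ hnm => EReal.coe_ennreal_le_coe_ennreal_iff.2 (h hnm)))

lemma iSup_sub_const {ι : Type*} [Nonempty ι] (g : ι → EReal) (c : EReal) (hc : c ≠ ⊥) :
    ⨆ i, (g i - c) = (⨆ i, g i) - c := by
  rcases eq_or_ne c ⊤ with rfl | hc'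
  · simp [EReal.sub_top]
  · lift c to ℝ using ⟨hc', hc⟩
    apply le_antisymm
    · exact iSup_le fun i => EReal.sub_le_sub (le_iSup g i) le_rfl
    · rw [EReal.sub_le_iff_le_add (.inl (EReal.coe_ne_bot c)) (.inl (EReal.coe_ne_top c))]
      refine iSup_le fun i => ?_
      calc g i = g i - c + c := EReal.sub_add_cancel.symm
        _ ≤ (⨆ i, g i - c) + c := add_le_add (le_iSup (fun i => g i - (c:EReal)) i) le_rfl

lemma toENN_sup_trunc (a : EReal) :
    ⨆ n : ℕ, erealToENNReal (a ⊓ ((n:ℝ):EReal)) = erealToENNReal a := by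
  apply le_antisymm
  · exact iSup_le fun n => toENN_mono inf_le_left
  · rcases eq_or_ne a ⊤ with rfl | ha
    · have h1 : ∀ n : ℕ, erealToENNReal ((⊤:EReal) ⊓ ((n:ℝ):EReal)) = (n : ℝ≥0∞) := by
        intro n
        rw [inf_eq_right.2 le_top, erealToENNReal, if_neg (EReal.coe_ne_top _),
          EReal.toReal_coe, ENNReal.ofReal_natCast]
      simp only [h1]
      rw [ENNReal.iSup_natCast]
      exact le_top
    · have hex : ∃ n : ℕ, a ≤ ((n:ℝ):EReal) := by
        rcases eq_or_ne a ⊥ with rfl | hb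
        · exact ⟨0, bot_le⟩
        · lift a to ℝ using ⟨ha, hb⟩
          exact ⟨⌈a⌉₊, by exact_mod_cast EReal.coe_le_coe_iff.2 (Nat.le_ceil a)⟩
      obtain ⟨n, hn⟩ := hex
      exact le_iSup_of_le n (by rw [inf_eq_left.2 hn])

lemma erealIntegral_eq {X : Type*} [MeasurableSpace X] (μ : Measure X) (f : X → EReal) :
    erealIntegral μ f =
      if (∫⁻ x, erealToENNReal (-(f x)) ∂μ) = ⊤ then ⊥
      else ((∫⁻ x, erealToENNReal (f x) ∂μ : ℝ≥0∞) : EReal)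
        - ((∫⁻ x, erealToENNReal (-(f x)) ∂μ : ℝ≥0∞) : EReal) := by
  have h1 : (∫⁻ x, (if f x = ⊥ then ⊤ else ENNReal.ofReal (-(f x).toReal)) ∂μ)
      = ∫⁻ x, erealToENNReal (-(f x)) ∂μ := lintegral_congr fun x => negInt_eq (f x)
  have h2 : (∫⁻ x, (if f x = ⊤ then ⊤ else ENNReal.ofReal ((f x).toReal)) ∂μ)
      = ∫⁻ x, erealToENNReal (f x) ∂μ := rfl
  rw [erealIntegral, h1, h2]

lemma erealIntegral_mono {X : Type*} [MeasurableSpace X] (μ : Measure X) {f g : X → EReal}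
    (h : ∀ x, f x ≤ g x) : erealIntegral μ f ≤ erealIntegral μ g := by
  rw [erealIntegral_eq, erealIntegral_eq]
  have hP : (∫⁻ x, erealToENNReal (f x) ∂μ) ≤ ∫⁻ x, erealToENNReal (g x) ∂μ :=
    lintegral_mono fun x => toENN_mono (h x)
  have hN : (∫⁻ x, erealToENNReal (-(g x)) ∂μ) ≤ ∫⁻ x, erealToENNReal (-(f x)) ∂μ :=
    lintegral_mono fun x => toENN_mono (EReal.neg_le_neg_iff.2 (h x))
  split_ifs with h1 h2 h3
  · exact le_refl ⊥
  · exact bot_le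
  · exact absurd (top_le_iff.1 (h3 ▸ hN)) h1
  · exact EReal.sub_le_sub (EReal.coe_ennreal_le_coe_ennreal_iff.2 hP)
      (EReal.coe_ennreal_le_coe_ennreal_iff.2 hN)

lemma erealIntegral_sup_trunc {X : Type*} [MeasurableSpace X] (μ : Measure X)
    [IsProbabilityMeasure μ] {f : X → EReal} (hf : Measurable f) {C : ℝ}
    (hC : ∀ x, (C:EReal) ≤ f x) :
    erealIntegral μ f = ⨆ n : ℕ, erealIntegral μ (fun x => f x ⊓ ((n:ℝ):EReal)) := by
  have hbot : ∀ x, f x ≠ ⊥ := fun x h => by simpa [h] using hC x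
  have hneg_bd : ∀ x, erealToENNReal (-(f x)) ≤ ENNReal.ofReal |C| := by
    intro x
    have hne : -(f x) ≠ ⊤ := by simpa [EReal.neg_eq_top_iff] using hbot x
    rw [erealToENNReal, if_neg hne]
    apply ENNReal.ofReal_le_ofReal
    rcases eq_or_ne (f x) ⊤ with h | h
    · simp [h, abs_nonneg]
    · rw [EReal.toReal_neg_eq]
      have := EReal.toReal_le_toReal (hC x) (EReal.coe_ne_bot C) h
      rw [EReal.toReal_coe] at this
      linarith [neg_abs_le C]
  set N := ∫⁻ x, erealToENNReal (-(f x)) ∂μ with hNdef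
  have hNfin : N ≠ ⊤ := by
    have hle : N ≤ ENNReal.ofReal |C| := by
      calc N ≤ ∫⁻ _, ENNReal.ofReal |C| ∂μ := lintegral_mono hneg_bd
        _ = ENNReal.ofReal |C| := by simp
    exact ne_top_of_le_ne_top ENNReal.ofReal_ne_top hle
  have hnegtr : ∀ (n : ℕ) (x : X), erealToENNReal (-(f x ⊓ ((n:ℝ):EReal)))
      = erealToENNReal (-(f x)) := by
    intro n x
    rcases le_total (f x) ((n:ℝ):EReal) with h | h
    · rw [inf_eq_left.2 h]
    · rw [inf_eq_right.2 h]
      have h0 : (0:EReal) ≤ ((n:ℝ):EReal) := by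
        exact_mod_cast EReal.coe_le_coe_iff.2 (Nat.cast_nonneg n)
      rw [toENN_of_nonpos (by rw [← neg_zero]; exact EReal.neg_le_neg_iff.2 h0),
        toENN_of_nonpos (by rw [← neg_zero]; exact EReal.neg_le_neg_iff.2 (h0.trans h))]
  set P : ℕ → ℝ≥0∞ := fun n => ∫⁻ x, erealToENNReal (f x ⊓ ((n:ℝ):EReal)) ∂μ with hPdef
  have hPmono : Monotone P := by
    intro n m hnm
    exact lintegral_mono fun x => toENN_mono (inf_le_inf_left _ (by exact_mod_cast hnm))
  have hPsup : (⨆ n, P n) = ∫⁻ x, erealToENNReal (f x) ∂μ := by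
    have hmeas : ∀ n : ℕ, Measurable fun x => erealToENNReal (f x ⊓ ((n:ℝ):EReal)) :=
      fun n => measurable_toENN.comp (hf.min measurable_const)
    have hmono : Monotone fun (n : ℕ) (x : X) => erealToENNReal (f x ⊓ ((n:ℝ):EReal)) :=
      fun n m hnm x => toENN_mono (inf_le_inf_left _ (by exact_mod_cast hnm))
    rw [hPdef, ← lintegral_iSup hmeas hmono]
    exact lintegral_congr fun x => toENN_sup_trunc (f x)
  have htr : ∀ n : ℕ, erealIntegral μ (fun x => f x ⊓ ((n:ℝ):EReal))
      = ((P n : ℝ≥0∞) : EReal) - ((N : ℝ≥0∞) : EReal) := by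
    intro n
    rw [erealIntegral_eq]
    have : (∫⁻ x, erealToENNReal (-(f x ⊓ ((n:ℝ):EReal))) ∂μ) = N :=
      lintegral_congr fun x => hnegtr n x
    rw [this, if_neg hNfin]
  rw [erealIntegral_eq, if_neg hNfin]
  simp only [htr]
  rw [iSup_sub_const _ _ (EReal.coe_ennreal_ne_bot N), ← coe_iSup_ennreal hPmono, hPsup]

end Helpers



/-- **Lemma 2.5** (extension of `ρ` to unbounded functions by truncation from above): for
measurable `f : E → ℝ ∪ {∞}` bounded from below, `ρ(f) = lim_m ρ(f ∧ m) = sup_{m>0} ρ(f ∧ m)`. -/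
theorem extended_duality
    {E : Type*} [MeasurableSpace E] [TopologicalSpace E] [PolishSpace E] [BorelSpace E]
    [Nonempty E]
    (α : ProbabilityMeasure E → EReal)
    (hproper : ∃ ν, α ν ≠ ⊤) (hbot : ∀ ν, α ν ≠ ⊥)
    (hconvex : ∀ (μ₁ μ₂ : ProbabilityMeasure E) (t : ℝ≥0), t ≤ 1 →
      extend α ((t : ℝ≥0∞) • (μ₁ : Measure E) + ((1 - t : ℝ≥0) : ℝ≥0∞) • (μ₂ : Measure E))
        ≤ ((t : ℝ) : EReal) * α μ₁ + (((1 - t : ℝ≥0) : ℝ) : EReal) * α μ₂)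
    (hcompact : ∀ c : ℝ, IsCompact {ν : ProbabilityMeasure E | α ν ≤ (c : EReal)})
    (f : E → EReal) (hfmeas : Measurable f) (hbdd : ∃ C : ℝ, ∀ x, (C : EReal) ≤ f x) :
    Filter.Tendsto (fun m : ℝ => rhoE α fun x => f x ⊓ (m : EReal)) Filter.atTop
      (𝓝 (rhoE α f)) ∧
    rhoE α f = ⨆ (m : ℝ) (_ : 0 < m), rhoE α fun x => f x ⊓ (m : EReal) := by
  obtain ⟨C, hC⟩ := hbdd
  set F : ℝ → EReal := fun m => rhoE α fun x => f x ⊓ (m : EReal) with hF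
  have hFmono : Monotone F := by
    intro m m' h
    exact iSup_mono fun ν => EReal.sub_le_sub
      (erealIntegral_mono _ fun x => inf_le_inf_left _ (EReal.coe_le_coe_iff.2 h)) le_rfl
  have hsup : (⨆ m : ℝ, F m) = rhoE α f := by
    apply le_antisymm
    · exact iSup_le fun m => iSup_mono fun ν => EReal.sub_le_sub
        (erealIntegral_mono _ fun x => inf_le_left) le_rfl
    · refine iSup_le fun ν => ?_
      have hI : erealIntegral (ν : Measure E) f
          = ⨆ n : ℕ, erealIntegral (ν : Measure E) (fun x => f x ⊓ ((n:ℝ):EReal)) :=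
        erealIntegral_sup_trunc _ hfmeas hC
      rw [hI, ← iSup_sub_const _ _ (hbot ν)]
      refine iSup_le fun n => le_iSup_of_le ((n:ℝ)) ?_
      exact le_iSup (fun ν' : ProbabilityMeasure E =>
        erealIntegral (ν' : Measure E) (fun x => f x ⊓ (((n:ℝ):ℝ):EReal)) - α ν') ν
  have hsup_pos : (⨆ (m : ℝ) (_ : 0 < m), F m) = ⨆ m : ℝ, F m := by
    apply le_antisymm
    · exact iSup_le fun m => iSup_le fun _ => le_iSup F m
    · refine iSup_le fun m => ?_
      refine le_iSup₂_of_le (max m 1) (lt_of_lt_of_le one_pos (le_max_right m 1))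
        (hFmono (le_max_left m 1))
  constructor
  · rw [← hsup]
    exact tendsto_atTop_iSup hFmono
  · rw [← hsup, ← hsup_pos]


end SanovDual
end
end

section
/- Let ψ : E → [0,∞) be continuous and suppose the strong Cramér condition holds: lim_{m→∞} ρ(λ ψ 1_{{ψ ≥ m}}) = ρ(0) for every λ > 0. Then for each c ∈ ℝ, the sub-level set {ν ∈ P(E) : α(ν) ≤ c} is contained in P_ψ(E), the weak and ψ-weak topologies coincide on it, and in particular every sub-level set of α is ψ-weakly compact. -/
open MeasureTheory ProbabilityTheory Filter Topology Set
open scoped ENNReal NNReal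

noncomputable section

namespace SanovDual

attribute [local instance] Classical.propDecidable

open scoped BoundedContinuousFunction

private lemma aux_ennreal_le_of_ereal_le {x : ℝ≥0∞} {y : ℝ}
    (h : (x : EReal) ≤ (y : EReal)) : x ≤ ENNReal.ofReal y := by
  by_contra hc
  push_neg at hc
  have h1 : ((ENNReal.ofReal y : ℝ≥0∞) : EReal) < (x : EReal) :=
    EReal.coe_ennreal_lt_coe_ennreal_iff.mpr hc
  have h2 : (y : EReal) ≤ ((ENNReal.ofReal y : ℝ≥0∞) : EReal) := by
    rw [EReal.coe_ennreal_ofReal]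
    exact EReal.coe_le_coe_iff.mpr (le_max_left y 0)
  exact absurd h (not_le.mpr (lt_of_le_of_lt h2 h1))

private lemma aux_rhoNN_eq {E : Type*} [MeasurableSpace E] (α : ProbabilityMeasure E → EReal)
    (g : E → ℝ≥0∞) :
    rhoNN α g
      = ⨆ ν : ProbabilityMeasure E, ((∫⁻ x, g x ∂(ν : Measure E) : ℝ≥0∞) : EReal) - α ν := rfl

private lemma aux_alpha_bddBelow {E : Type*} [MeasurableSpace E] [TopologicalSpace E]
    [PolishSpace E] [BorelSpace E] (α : ProbabilityMeasure E → EReal)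
    (hbot : ∀ ν, α ν ≠ ⊥)
    (hcompact : ∀ c : ℝ, IsCompact {ν : ProbabilityMeasure E | α ν ≤ (c : EReal)}) :
    ∃ B : ℝ, ∀ ν, (B : EReal) ≤ α ν := by
  by_contra h
  push_neg at h
  have htn : ∀ n : ℕ, {ν : ProbabilityMeasure E | α ν ≤ ((-(n : ℝ) : ℝ) : EReal)}.Nonempty := by
    intro n
    obtain ⟨ν, hν⟩ := h (-(n : ℝ))
    exact ⟨ν, hν.le⟩
  have htd : ∀ n : ℕ, {ν : ProbabilityMeasure E | α ν ≤ ((-((n+1 : ℕ) : ℝ) : ℝ) : EReal)}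
      ⊆ {ν : ProbabilityMeasure E | α ν ≤ ((-(n : ℝ) : ℝ) : EReal)} := by
    intro n ν hν
    refine le_trans hν (EReal.coe_le_coe_iff.mpr ?_)
    push_cast; linarith
  obtain ⟨ν, hν⟩ := IsCompact.nonempty_iInter_of_sequence_nonempty_isCompact_isClosed
    (fun n : ℕ => {ν : ProbabilityMeasure E | α ν ≤ ((-(n : ℝ) : ℝ) : EReal)}) htd htn
    (hcompact _) (fun n => (hcompact _).isClosed)
  have hle : ∀ n : ℕ, α ν ≤ ((-(n : ℝ) : ℝ) : EReal) := fun n => Set.mem_iInter.mp hν n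
  apply hbot ν
  by_contra hb
  have h0 : α ν ≤ ((0 : ℝ) : EReal) := by simpa using hle 0
  have hT : α ν ≠ ⊤ := by
    intro hT
    rw [hT] at h0
    exact (EReal.coe_lt_top (0:ℝ)).not_ge h0
  obtain ⟨n, hn⟩ := exists_nat_gt (-(α ν).toReal)
  have h2 := hle n
  rw [← EReal.coe_toReal hT hb, EReal.coe_le_coe_iff] at h2
  linarith

private lemma aux_rhoNN_zero_real {E : Type*} [MeasurableSpace E] [TopologicalSpace E]
    [PolishSpace E] [BorelSpace E] (α : ProbabilityMeasure E → EReal)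
    (hproper : ∃ ν, α ν ≠ ⊤) (hbot : ∀ ν, α ν ≠ ⊥)
    (hcompact : ∀ c : ℝ, IsCompact {ν : ProbabilityMeasure E | α ν ≤ (c : EReal)}) :
    rhoNN α (fun _ => 0) ≠ ⊤ ∧ rhoNN α (fun _ => 0) ≠ ⊥ := by
  obtain ⟨B, hB⟩ := aux_alpha_bddBelow α hbot hcompact
  constructor
  · have hle : rhoNN α (fun _ => 0) ≤ ((-B : ℝ) : EReal) := by
      rw [aux_rhoNN_eq]
      refine iSup_le fun ν => ?_
      have h1 : ((∫⁻ _, (0:ℝ≥0∞) ∂(ν : Measure E) : ℝ≥0∞) : EReal) - α ν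
          ≤ (0 : EReal) - ((B : ℝ) : EReal) := by
        refine EReal.sub_le_sub ?_ (hB ν)
        rw [lintegral_zero]
        simp
      refine h1.trans (le_of_eq ?_)
      rw [show ((-B : ℝ) : EReal) = (((0 : ℝ) - B : ℝ) : EReal) by norm_num, EReal.coe_sub]
      norm_num
    exact ne_top_of_le_ne_top (EReal.coe_ne_top _) hle
  · obtain ⟨ν₀, hν₀⟩ := hproper
    have hge : ((0 - (α ν₀).toReal : ℝ) : EReal) ≤ rhoNN α (fun _ => 0) := by
      have heq : ((0 - (α ν₀).toReal : ℝ) : EReal)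
          = ((∫⁻ _, (0:ℝ≥0∞) ∂(ν₀ : Measure E) : ℝ≥0∞) : EReal) - α ν₀ := by
        rw [lintegral_zero, EReal.coe_sub, EReal.coe_toReal hν₀ (hbot ν₀)]
        norm_num
      rw [heq, aux_rhoNN_eq]
      exact le_iSup (fun ν : ProbabilityMeasure E =>
        ((∫⁻ _, (0:ℝ≥0∞) ∂(ν : Measure E) : ℝ≥0∞) : EReal) - α ν) ν₀
    intro hb
    rw [hb] at hge
    exact (EReal.coe_ne_bot _) (le_bot_iff.mp hge)

private lemma aux_tail_bound {E : Type*} [MeasurableSpace E] [TopologicalSpace E]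
    [PolishSpace E] [BorelSpace E] (α : ProbabilityMeasure E → EReal)
    (hproper : ∃ ν, α ν ≠ ⊤) (hbot : ∀ ν, α ν ≠ ⊥)
    (hcompact : ∀ c : ℝ, IsCompact {ν : ProbabilityMeasure E | α ν ≤ (c : EReal)})
    (ψ : E → ℝ)
    (hsc : ∀ lam : ℝ, 0 < lam →
      Filter.Tendsto
        (fun m : ℝ => rhoNN α ({x | m ≤ ψ x}.indicator fun x => ENNReal.ofReal (lam * ψ x)))
        Filter.atTop (𝓝 (rhoNN α fun _ => 0)))
    (c ε : ℝ) (hε : 0 < ε) :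
    ∃ M : ℝ, ∀ m : ℝ, M ≤ m → ∀ ν : ProbabilityMeasure E, α ν ≤ (c : EReal) →
      ∫⁻ x, ({x | m ≤ ψ x}.indicator fun x => ENNReal.ofReal (ψ x)) x ∂(ν : Measure E)
        ≤ ENNReal.ofReal ε := by
  obtain ⟨hnt, hnb⟩ := aux_rhoNN_zero_real α hproper hbot hcompact
  set r := (rhoNN α (fun _ => 0)).toReal with hr
  have hrr : rhoNN α (fun _ => 0) = (r : EReal) := (EReal.coe_toReal hnt hnb).symm
  set lam := (|r| + |c| + 2) / ε with hlamdef
  have hlam : 0 < lam := by positivity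
  have hev : ∀ᶠ m : ℝ in atTop,
      rhoNN α ({x | m ≤ ψ x}.indicator fun x => ENNReal.ofReal (lam * ψ x))
        < ((r + 1 : ℝ) : EReal) := by
    refine (hsc lam hlam).eventually_lt_const ?_
    rw [hrr]
    exact EReal.coe_lt_coe_iff.mpr (by linarith)
  obtain ⟨M, hM⟩ := eventually_atTop.mp hev
  refine ⟨M, fun m hm ν hν => ?_⟩
  set L := ∫⁻ x, ({x | m ≤ ψ x}.indicator fun x => ENNReal.ofReal (ψ x)) x ∂(ν : Measure E)
    with hL
  have hLlam : ∫⁻ x, ({x | m ≤ ψ x}.indicator fun x => ENNReal.ofReal (lam * ψ x)) x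
      ∂(ν : Measure E) = ENNReal.ofReal lam * L := by
    rw [hL, ← lintegral_const_mul' _ _ ENNReal.ofReal_ne_top]
    congr 1; funext x
    by_cases hx : x ∈ {x | m ≤ ψ x}
    · simp [Set.indicator_of_mem hx, ENNReal.ofReal_mul hlam.le]
    · simp [Set.indicator_of_notMem hx]
  have hkey : ((ENNReal.ofReal lam * L : ℝ≥0∞) : EReal) - α ν
      < ((r + 1 : ℝ) : EReal) := by
    refine lt_of_le_of_lt ?_ (hM m hm)
    rw [aux_rhoNN_eq, ← hLlam]
    exact le_iSup (fun ν' : ProbabilityMeasure E =>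
      ((∫⁻ x, ({x | m ≤ ψ x}.indicator fun x => ENNReal.ofReal (lam * ψ x)) x
        ∂(ν' : Measure E) : ℝ≥0∞) : EReal) - α ν') ν
  have h2 : ((ENNReal.ofReal lam * L : ℝ≥0∞) : EReal) - ((c : ℝ) : EReal)
      ≤ ((r + 1 : ℝ) : EReal) :=
    le_trans (EReal.sub_le_sub (le_refl _) hν) hkey.le
  have h3 : ((ENNReal.ofReal lam * L : ℝ≥0∞) : EReal) ≤ ((r + 1 + c : ℝ) : EReal) := by
    have h4 := (EReal.sub_le_iff_le_add (.inl (EReal.coe_ne_bot c))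
      (.inl (EReal.coe_ne_top c))).mp h2
    rwa [← EReal.coe_add] at h4
  have h4 : ENNReal.ofReal lam * L ≤ ENNReal.ofReal (r + 1 + c) := aux_ennreal_le_of_ereal_le h3
  have h5 : L ≤ ENNReal.ofReal ((r + 1 + c) / lam) := by
    rw [ENNReal.ofReal_div_of_pos hlam, ENNReal.le_div_iff_mul_le
      (Or.inl (ENNReal.ofReal_pos.mpr hlam).ne') (Or.inl ENNReal.ofReal_ne_top), mul_comm]
    exact h4
  refine h5.trans (ENNReal.ofReal_le_ofReal ?_)
  rw [div_le_iff₀ hlam]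
  have hεlam : ε * lam = |r| + |c| + 2 := by
    rw [hlamdef]; field_simp
  nlinarith [le_abs_self r, le_abs_self c]

private lemma aux_psi_int {E : Type*} [MeasurableSpace E] [TopologicalSpace E]
    [PolishSpace E] [BorelSpace E] (α : ProbabilityMeasure E → EReal)
    (hproper : ∃ ν, α ν ≠ ⊤) (hbot : ∀ ν, α ν ≠ ⊥)
    (hcompact : ∀ c : ℝ, IsCompact {ν : ProbabilityMeasure E | α ν ≤ (c : EReal)})
    (ψ : E → ℝ)
    (hsc : ∀ lam : ℝ, 0 < lam →
      Filter.Tendsto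
        (fun m : ℝ => rhoNN α ({x | m ≤ ψ x}.indicator fun x => ENNReal.ofReal (lam * ψ x)))
        Filter.atTop (𝓝 (rhoNN α fun _ => 0)))
    (c : ℝ) :
    ∀ ν : ProbabilityMeasure E, α ν ≤ (c : EReal) →
      ∫⁻ x, ENNReal.ofReal (ψ x) ∂(ν : Measure E) ≠ ⊤ := by
  obtain ⟨M, hM⟩ := aux_tail_bound α hproper hbot hcompact ψ hsc c 1 one_pos
  intro ν hν
  set m := max M 0 with hm
  have h1 := hM m (le_max_left _ _) ν hν
  have hpt : ∀ x, ENNReal.ofReal (ψ x)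
      ≤ ({x | m ≤ ψ x}.indicator fun x => ENNReal.ofReal (ψ x)) x + ENNReal.ofReal m := by
    intro x
    by_cases hx : x ∈ {x | m ≤ ψ x}
    · rw [Set.indicator_of_mem hx]; exact le_self_add
    · rw [Set.indicator_of_notMem hx, zero_add]
      exact ENNReal.ofReal_le_ofReal (le_of_not_ge hx)
  have hle : ∫⁻ x, ENNReal.ofReal (ψ x) ∂(ν : Measure E)
      ≤ ∫⁻ x, (({x | m ≤ ψ x}.indicator fun x => ENNReal.ofReal (ψ x)) x + ENNReal.ofReal m)
        ∂(ν : Measure E) := lintegral_mono hpt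
  rw [lintegral_add_right _ measurable_const, lintegral_const] at hle
  refine ne_top_of_le_ne_top ?_ hle
  refine ENNReal.add_ne_top.mpr ⟨ne_top_of_le_ne_top ENNReal.ofReal_ne_top h1, ?_⟩
  exact ENNReal.mul_ne_top ENNReal.ofReal_ne_top (by simp)

private lemma aux_cont_integral {E : Type*} [MeasurableSpace E] [TopologicalSpace E]
    [PolishSpace E] [BorelSpace E] (α : ProbabilityMeasure E → EReal)
    (hproper : ∃ ν, α ν ≠ ⊤) (hbot : ∀ ν, α ν ≠ ⊥)
    (hcompact : ∀ c : ℝ, IsCompact {ν : ProbabilityMeasure E | α ν ≤ (c : EReal)})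
    (ψ : E → ℝ) (hψc : Continuous ψ) (hψ0 : ∀ x, 0 ≤ ψ x)
    (hsc : ∀ lam : ℝ, 0 < lam →
      Filter.Tendsto
        (fun m : ℝ => rhoNN α ({x | m ≤ ψ x}.indicator fun x => ENNReal.ofReal (lam * ψ x)))
        Filter.atTop (𝓝 (rhoNN α fun _ => 0)))
    (c : ℝ)
    {X : Type*} (tX : TopologicalSpace X) (T : X → ProbabilityMeasure E)
    (hT : @Continuous X _ tX _ T) (hα : ∀ x, α (T x) ≤ (c : EReal))
    (f : E → ℝ) (hf : Continuous f) (hfb : ∀ y, |f y| ≤ 1 + ψ y) :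
    @Continuous X ℝ tX _ (fun x => ∫ y, f y ∂(T x : Measure E)) := by
  letI := tX
  have hg : ∀ n : ℕ, ∃ g : E →ᵇ ℝ, ∀ y, g y = max (min (f y) (n : ℝ)) (-(n : ℝ)) := by
    intro n
    refine ⟨BoundedContinuousFunction.ofNormedAddCommGroup _
      ((hf.min continuous_const).max continuous_const) (n : ℝ) ?_, fun y => rfl⟩
    intro y
    rw [Real.norm_eq_abs, abs_le]
    refine ⟨le_max_right _ _, max_le (min_le_right _ _) (neg_le_self (Nat.cast_nonneg n))⟩
  choose g hgdef using hg
  refine TendstoUniformly.continuous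
    (F := fun (n : ℕ) (x : X) => ∫ y, g n y ∂(T x : Measure E)) (p := atTop) ?_ ?_
  · rw [Metric.tendstoUniformly_iff]
    intro ε hε
    obtain ⟨M, hM⟩ := aux_tail_bound α hproper hbot hcompact ψ hsc c (ε/4) (by positivity)
    have hNn : ∀ᶠ n : ℕ in atTop, M + 1 ≤ (n : ℝ) ∧ 2 ≤ (n : ℝ) := by
      filter_upwards [eventually_ge_atTop (max (⌈M+1⌉₊) 2)] with n hn
      have h2 : ((max ⌈M+1⌉₊ 2 : ℕ) : ℝ) ≤ (n : ℝ) := Nat.cast_le.mpr hn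
      constructor
      · refine le_trans (Nat.le_ceil _) (le_trans ?_ h2)
        exact_mod_cast Nat.cast_le.mpr (le_max_left _ _)
      · refine le_trans ?_ h2
        exact_mod_cast Nat.cast_le.mpr (le_max_right _ _)
    filter_upwards [hNn] with n hn
    obtain ⟨hn1, hn2⟩ := hn
    intro x
    have hν := hα x
    set ν := T x with hνdef
    have hψint : ∫⁻ y, ENNReal.ofReal (ψ y) ∂(ν : Measure E) ≠ ⊤ :=
      aux_psi_int α hproper hbot hcompact ψ hsc c ν hν
    have h1ψ : Integrable (fun y => 1 + ψ y) (ν : Measure E) := by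
      refine ⟨(continuous_const.add hψc).aestronglyMeasurable, ?_⟩
      have heq : (fun y => ‖1 + ψ y‖ₑ) = fun y => ENNReal.ofReal (1 + ψ y) :=
        funext fun y => Real.enorm_eq_ofReal (by have := hψ0 y; linarith)
      rw [HasFiniteIntegral, heq]
      simp_rw [ENNReal.ofReal_add zero_le_one (hψ0 _)]
      rw [lintegral_add_left measurable_const, lintegral_const]
      simp only [ENNReal.ofReal_one, measure_univ, mul_one, one_mul]
      exact ENNReal.add_lt_top.mpr ⟨ENNReal.one_lt_top, lt_top_iff_ne_top.mpr hψint⟩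
    have hfint : Integrable f (ν : Measure E) :=
      h1ψ.mono' hf.aestronglyMeasurable (ae_of_all _ fun y => by
        rw [Real.norm_eq_abs]; exact hfb y)
    have hgint : Integrable (g n) (ν : Measure E) := (g n).integrable _
    rw [Real.dist_eq, ← integral_sub hfint hgint]
    refine lt_of_le_of_lt ?_ (by linarith : ε/2 < ε)
    calc |∫ y, (f y - g n y) ∂(ν : Measure E)|
        ≤ ∫ y, |f y - g n y| ∂(ν : Measure E) := by
          simpa [Real.norm_eq_abs] using
            norm_integral_le_integral_norm (μ := (ν : Measure E)) (fun y => f y - g n y)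
      _ = (∫⁻ y, ENNReal.ofReal |f y - g n y| ∂(ν : Measure E)).toReal :=
          integral_eq_lintegral_of_nonneg_ae (ae_of_all _ fun y => abs_nonneg _)
            ((hf.sub (g n).continuous).abs.aestronglyMeasurable)
      _ ≤ (ENNReal.ofReal (ε/2)).toReal := by
          refine ENNReal.toReal_mono ENNReal.ofReal_ne_top ?_
          calc ∫⁻ y, ENNReal.ofReal |f y - g n y| ∂(ν : Measure E)
              ≤ ∫⁻ y, 2 * ({x | (n : ℝ) - 1 ≤ ψ x}.indicator
                  fun x => ENNReal.ofReal (ψ x)) y ∂(ν : Measure E) := by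
                refine lintegral_mono fun y => ?_
                rw [hgdef]
                by_cases hy : |f y| ≤ (n : ℝ)
                · have hcl : max (min (f y) (n : ℝ)) (-(n : ℝ)) = f y := by
                    rw [min_eq_left (le_of_abs_le hy), max_eq_left (neg_le_of_abs_le hy)]
                  simp [hcl]
                · push_neg at hy
                  have hmem : y ∈ {x | (n : ℝ) - 1 ≤ ψ x} := by
                    have := hfb y
                    simp only [Set.mem_setOf_eq]
                    linarith
                  rw [Set.indicator_of_mem hmem]
                  have habs : |f y - max (min (f y) (n : ℝ)) (-(n : ℝ))| ≤ ψ y := by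
                    have hb := hfb y
                    rcases le_or_gt (f y) (n : ℝ) with h1 | h1
                    · have hfy : f y < -(n : ℝ) := by
                        rcases lt_abs.mp hy with h | h
                        · linarith
                        · linarith
                      rw [min_eq_left h1, max_eq_right hfy.le]
                      have hnn : f y + (n : ℝ) ≤ 0 := by linarith
                      rw [show f y - -(n : ℝ) = f y + (n : ℝ) by ring, abs_of_nonpos hnn]
                      have h3 : -(f y) ≤ 1 + ψ y := (neg_le_abs _).trans hb
                      linarith
                    · rw [min_eq_right h1.le, max_eq_left (by linarith : -(n:ℝ) ≤ (n:ℝ))]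
                      rw [abs_of_nonneg (by linarith : (0:ℝ) ≤ f y - (n : ℝ))]
                      have h3 : f y ≤ 1 + ψ y := (le_abs_self _).trans hb
                      linarith
                  calc ENNReal.ofReal |f y - max (min (f y) (n:ℝ)) (-(n:ℝ))|
                      ≤ ENNReal.ofReal (ψ y) := ENNReal.ofReal_le_ofReal habs
                    _ ≤ 2 * ENNReal.ofReal (ψ y) := by
                        rw [two_mul]; exact le_self_add
            _ = 2 * ∫⁻ y, ({x | (n : ℝ) - 1 ≤ ψ x}.indicator
                  fun x => ENNReal.ofReal (ψ x)) y ∂(ν : Measure E) :=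
                lintegral_const_mul' _ _ (by simp)
            _ ≤ 2 * ENNReal.ofReal (ε/4) :=
                mul_le_mul_right (hM ((n : ℝ) - 1) (by linarith) ν hν) 2
            _ = ENNReal.ofReal (ε/2) := by
                rw [show (2 : ℝ≥0∞) = ENNReal.ofReal 2 by norm_num,
                  ← ENNReal.ofReal_mul (by norm_num)]
                congr 1
                ring
      _ = ε/2 := ENNReal.toReal_ofReal (by positivity)
  · exact Filter.Frequently.of_forall fun n =>
      (ProbabilityMeasure.continuous_integral_boundedContinuousFunction (g n)).comp hT

private lemma aux_toProb_continuous {E : Type*} [MeasurableSpace E] [TopologicalSpace E]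
    [OpensMeasurableSpace E]
    (ψ : E → ℝ) (hψ0 : ∀ x, 0 ≤ ψ x) :
    Continuous (Pw.toProb : Pw E ψ → ProbabilityMeasure E) := by
  rw [continuous_iff_continuousAt]
  intro ν₀
  rw [ContinuousAt, ProbabilityMeasure.tendsto_iff_forall_integral_tendsto]
  intro gb
  set R : ℝ := ‖gb‖ + 1 with hR
  have hRpos : (0:ℝ) < R := by positivity
  set g' : E → ℝ := fun y => R⁻¹ * gb y with hg'
  have hg'c : Continuous g' := continuous_const.mul gb.continuous
  have hg'b : ∀ y, |g' y| ≤ 1 + ψ y := by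
    intro y
    have h1 : |gb y| ≤ ‖gb‖ := by
      simpa [Real.norm_eq_abs] using gb.norm_coe_le_norm y
    have h0 : |g' y| = R⁻¹ * |gb y| := by
      rw [hg', abs_mul, abs_of_nonneg (by positivity : (0:ℝ) ≤ R⁻¹)]
    have h2 : R⁻¹ * |gb y| ≤ R⁻¹ * R := by
      refine mul_le_mul_of_nonneg_left ?_ (by positivity)
      linarith
    rw [inv_mul_cancel₀ hRpos.ne'] at h2
    rw [h0]
    have := hψ0 y
    linarith
  have hcont' : Continuous fun ν : Pw E ψ => ∫ y, g' y ∂(ν.toProb : Measure E) := by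
    have h : @Continuous (Pw E ψ) ℝ
        (⨅ (f : E → ℝ) (_ : Continuous f) (_ : ∀ x, |f x| ≤ 1 + ψ x),
          TopologicalSpace.induced (fun ν : Pw E ψ => ∫ x, f x ∂(ν.toProb : Measure E))
            inferInstance) _
        (fun ν : Pw E ψ => ∫ y, g' y ∂(ν.toProb : Measure E)) := by
      apply continuous_iInf_dom (i := g')
      apply continuous_iInf_dom (i := hg'c)
      apply continuous_iInf_dom (i := hg'b)
      exact continuous_induced_dom
    exact h
  have heq : ∀ ν : Pw E ψ, ∫ y, gb y ∂(ν.toProb : Measure E)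
      = R * ∫ y, g' y ∂(ν.toProb : Measure E) := by
    intro ν
    rw [hg']
    rw [integral_const_mul, ← mul_assoc, mul_inv_cancel₀ hRpos.ne', one_mul]
  have h2 : Tendsto (fun ν : Pw E ψ => R * ∫ y, g' y ∂(ν.toProb : Measure E)) (𝓝 ν₀)
      (𝓝 (R * ∫ y, g' y ∂(ν₀.toProb : Measure E))) := (hcont'.tendsto ν₀).const_mul R
  simpa only [heq] using h2

/-- **Proposition 2.12**: under the strong Cramér condition, the weak and `ψ`-weak topologies
coincide on each sub-level set of `α`; in particular sub-level sets are `ψ`-weakly compact. -/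
theorem strong_cramer_topologies
    {E : Type*} [MeasurableSpace E] [TopologicalSpace E] [PolishSpace E] [BorelSpace E]
    [Nonempty E]
    (α : ProbabilityMeasure E → EReal)
    (hproper : ∃ ν, α ν ≠ ⊤) (hbot : ∀ ν, α ν ≠ ⊥)
    (hconvex : ∀ (μ₁ μ₂ : ProbabilityMeasure E) (t : ℝ≥0), t ≤ 1 →
      extend α ((t : ℝ≥0∞) • (μ₁ : Measure E) + ((1 - t : ℝ≥0) : ℝ≥0∞) • (μ₂ : Measure E))
        ≤ ((t : ℝ) : EReal) * α μ₁ + (((1 - t : ℝ≥0) : ℝ) : EReal) * α μ₂)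
    (hcompact : ∀ c : ℝ, IsCompact {ν : ProbabilityMeasure E | α ν ≤ (c : EReal)})
    (ψ : E → ℝ) (hψc : Continuous ψ) (hψ0 : ∀ x, 0 ≤ ψ x)
    (hsc : ∀ lam : ℝ, 0 < lam →
      Filter.Tendsto
        (fun m : ℝ => rhoNN α ({x | m ≤ ψ x}.indicator fun x => ENNReal.ofReal (lam * ψ x)))
        Filter.atTop (𝓝 (rhoNN α fun _ => 0))) :
    ∀ c : ℝ,
      (∀ ν : ProbabilityMeasure E, α ν ≤ (c : EReal) →
        ∫⁻ x, ENNReal.ofReal (ψ x) ∂(ν : Measure E) ≠ ⊤) ∧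
      (TopologicalSpace.induced
          (fun ν : {ν : Pw E ψ // α ν.toProb ≤ (c : EReal)} => ν.1) inferInstance =
        TopologicalSpace.induced
          (fun ν : {ν : Pw E ψ // α ν.toProb ≤ (c : EReal)} => ν.1.toProb) inferInstance) ∧
      IsCompact {ν : Pw E ψ | α ν.toProb ≤ (c : EReal)} := by
  intro c
  have hpsi := aux_psi_int α hproper hbot hcompact ψ hsc c
  refine ⟨hpsi, ?_, ?_⟩
  · refine le_antisymm ?_ ?_
    · refine le_trans (induced_mono (continuous_iff_le_induced.mp
        (aux_toProb_continuous ψ hψ0))) (le_of_eq ?_)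
      exact induced_compose
    · have hLHS : (TopologicalSpace.induced
          (fun ν : {ν : Pw E ψ // α ν.toProb ≤ (c : EReal)} => ν.1)
          (⨅ (f : E → ℝ) (_ : Continuous f) (_ : ∀ x, |f x| ≤ 1 + ψ x),
            TopologicalSpace.induced (fun ν : Pw E ψ => ∫ x, f x ∂(ν.toProb : Measure E))
              inferInstance)) =
          ⨅ (f : E → ℝ) (_ : Continuous f) (_ : ∀ x, |f x| ≤ 1 + ψ x),
            TopologicalSpace.induced ((fun ν : Pw E ψ => ∫ x, f x ∂(ν.toProb : Measure E)) ∘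
              (fun ν : {ν : Pw E ψ // α ν.toProb ≤ (c : EReal)} => ν.1)) inferInstance := by
        simp_rw [induced_iInf, induced_compose]
      have hmain : (TopologicalSpace.induced
          (fun ν : {ν : Pw E ψ // α ν.toProb ≤ (c : EReal)} => ν.1.toProb) inferInstance)
          ≤ ⨅ (f : E → ℝ) (_ : Continuous f) (_ : ∀ x, |f x| ≤ 1 + ψ x),
            TopologicalSpace.induced ((fun ν : Pw E ψ => ∫ x, f x ∂(ν.toProb : Measure E)) ∘
              (fun ν : {ν : Pw E ψ // α ν.toProb ≤ (c : EReal)} => ν.1)) inferInstance := by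
        refine le_iInf fun f => le_iInf fun hf => le_iInf fun hb => ?_
        refine (continuous_iff_le_induced (t₁ := TopologicalSpace.induced
          (fun ν : {ν : Pw E ψ // α ν.toProb ≤ (c : EReal)} => ν.1.toProb)
          inferInstance)).mp ?_
        exact aux_cont_integral α hproper hbot hcompact ψ hψc hψ0 hsc c _
          (fun ν : {ν : Pw E ψ // α ν.toProb ≤ (c : EReal)} => ν.1.toProb)
          continuous_induced_dom (fun ν => ν.2) f hf hb
      exact le_trans hmain (le_of_eq hLHS.symm)
  · have hK : IsCompact {ν : ProbabilityMeasure E | α ν ≤ (c : EReal)} := hcompact c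
    haveI : CompactSpace {ν : ProbabilityMeasure E // α ν ≤ (c : EReal)} :=
      isCompact_iff_compactSpace.mp hK
    set G : {ν : ProbabilityMeasure E // α ν ≤ (c : EReal)} → Pw E ψ :=
      fun ν => ⟨ν.1, hpsi ν.1 ν.2⟩ with hGdef
    have hG : Continuous G := by
      have h : @Continuous _ _ _
          (⨅ (f : E → ℝ) (_ : Continuous f) (_ : ∀ x, |f x| ≤ 1 + ψ x),
            TopologicalSpace.induced (fun ν : Pw E ψ => ∫ x, f x ∂(ν.toProb : Measure E))
              inferInstance) G := by
        refine continuous_iInf_rng.mpr fun f => ?_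
        refine continuous_iInf_rng.mpr fun hf => ?_
        refine continuous_iInf_rng.mpr fun hb => ?_
        refine continuous_induced_rng.mpr ?_
        exact aux_cont_integral α hproper hbot hcompact ψ hψc hψ0 hsc c _
          (fun ν : {ν : ProbabilityMeasure E // α ν ≤ (c : EReal)} => ν.1)
          continuous_subtype_val (fun ν => ν.2) f hf hb
      exact h
    have hrange : {ν : Pw E ψ | α ν.toProb ≤ (c : EReal)} = Set.range G := by
      ext ν
      constructor
      · intro hν
        exact ⟨⟨ν.toProb, hν⟩, Subtype.ext rfl⟩
      · rintro ⟨w, rfl⟩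
        exact w.2
    rw [hrange]
    exact isCompact_range hG


end SanovDual
end
end

section
/- Let ψ : E → [0,∞) be continuous and suppose the sub-level sets of α are pre-compact subsets of P_ψ(E). If f : E → ℝ is upper semicontinuous and f ≤ c(1+ψ) pointwise for some c ≥ 0, then ρ(f) = lim_{m→∞} ρ(f ∨ (−m)) = inf_{m > 0} ρ(f ∨ (−m)). -/
open MeasureTheory ProbabilityTheory Filter Topology Set
open scoped ENNReal NNReal

noncomputable section

namespace SanovDual

attribute [local instance] Classical.propDecidable

/-! ### Auxiliary lemmas on `erealIntegral` of real-valued functions -/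

section ErealIntegralAux

variable {X : Type*} [MeasurableSpace X] {μ : Measure X}

lemma erealIntegral_coe_eq (g : X → ℝ) :
    erealIntegral μ (fun x => ((g x : ℝ) : EReal)) =
      if (∫⁻ x, ENNReal.ofReal (-(g x)) ∂μ) = ⊤ then ⊥
      else ((∫⁻ x, ENNReal.ofReal (g x) ∂μ : ℝ≥0∞) : EReal)
          - ((∫⁻ x, ENNReal.ofReal (-(g x)) ∂μ : ℝ≥0∞) : EReal) := by
  have h1 : ∀ x : X, (if ((g x : ℝ) : EReal) = ⊥ then (⊤ : ℝ≥0∞)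
      else ENNReal.ofReal (-(((g x : ℝ) : EReal)).toReal)) = ENNReal.ofReal (-(g x)) := by
    intro x; simp [EReal.coe_ne_bot]
  have h2 : ∀ x : X, (if ((g x : ℝ) : EReal) = ⊤ then (⊤ : ℝ≥0∞)
      else ENNReal.ofReal ((((g x : ℝ) : EReal)).toReal)) = ENNReal.ofReal (g x) := by
    intro x; simp [EReal.coe_ne_top]
  simp only [erealIntegral, h1, h2]

lemma ennreal_coe_eq_coe_toReal {p : ℝ≥0∞} (hp : p ≠ ⊤) :
    (p : EReal) = ((p.toReal : ℝ) : EReal) := by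
  lift p to ℝ≥0 using hp
  rfl

lemma lintegral_ofReal_ne_top_of_integrable {g : X → ℝ} (hg : Integrable g μ) :
    ∫⁻ x, ENNReal.ofReal (g x) ∂μ ≠ ⊤ := by
  have hb : ∀ x, ENNReal.ofReal (g x) ≤ (‖g x‖₊ : ℝ≥0∞) := by
    intro x
    rw [← enorm_eq_nnnorm, Real.enorm_eq_ofReal_abs]
    exact ENNReal.ofReal_le_ofReal (le_abs_self _)
  exact ne_top_of_le_ne_top hg.2.ne (lintegral_mono hb)

lemma erealIntegral_of_integrable {g : X → ℝ} (hg : Integrable g μ) :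
    erealIntegral μ (fun x => ((g x : ℝ) : EReal)) = ((∫ x, g x ∂μ : ℝ) : EReal) := by
  have hN : ∫⁻ x, ENNReal.ofReal (-(g x)) ∂μ ≠ ⊤ :=
    lintegral_ofReal_ne_top_of_integrable hg.neg
  have hP : ∫⁻ x, ENNReal.ofReal (g x) ∂μ ≠ ⊤ :=
    lintegral_ofReal_ne_top_of_integrable hg
  rw [erealIntegral_coe_eq, if_neg hN, ennreal_coe_eq_coe_toReal hP, ennreal_coe_eq_coe_toReal hN,
    ← EReal.coe_sub, integral_eq_lintegral_pos_part_sub_lintegral_neg_part hg]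

lemma erealIntegral_coe_mono {g₁ g₂ : X → ℝ} (h : ∀ x, g₁ x ≤ g₂ x) :
    erealIntegral μ (fun x => ((g₁ x : ℝ) : EReal))
      ≤ erealIntegral μ (fun x => ((g₂ x : ℝ) : EReal)) := by
  rw [erealIntegral_coe_eq, erealIntegral_coe_eq]
  have hN : ∫⁻ x, ENNReal.ofReal (-(g₂ x)) ∂μ ≤ ∫⁻ x, ENNReal.ofReal (-(g₁ x)) ∂μ :=
    lintegral_mono fun x => ENNReal.ofReal_le_ofReal (by linarith [h x])
  have hP : ∫⁻ x, ENNReal.ofReal (g₁ x) ∂μ ≤ ∫⁻ x, ENNReal.ofReal (g₂ x) ∂μ :=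
    lintegral_mono fun x => ENNReal.ofReal_le_ofReal (h x)
  by_cases h1 : ∫⁻ x, ENNReal.ofReal (-(g₁ x)) ∂μ = ⊤
  · rw [if_pos h1]; exact bot_le
  · have h2 : ∫⁻ x, ENNReal.ofReal (-(g₂ x)) ∂μ ≠ ⊤ := ne_top_of_le_ne_top h1 hN
    rw [if_neg h1, if_neg h2]
    exact EReal.sub_le_sub (EReal.coe_ennreal_le_coe_ennreal_iff.2 hP)
      (EReal.coe_ennreal_le_coe_ennreal_iff.2 hN)

end ErealIntegralAux

lemma rhoE_coe_mono {E : Type*} [MeasurableSpace E] (α : ProbabilityMeasure E → EReal)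
    {g₁ g₂ : E → ℝ} (h : ∀ x, g₁ x ≤ g₂ x) :
    rhoE α (fun x => ((g₁ x : ℝ) : EReal)) ≤ rhoE α (fun x => ((g₂ x : ℝ) : EReal)) :=
  iSup_mono fun ν => EReal.sub_le_sub (erealIntegral_coe_mono h) le_rfl

/-! ### Semicontinuity helpers -/

section Semicont

variable {X : Type*} [TopologicalSpace X]

lemma usc_max_const {g : X → ℝ} (hg : UpperSemicontinuous g) (b : ℝ) :
    UpperSemicontinuous fun x => max (g x) b := by
  intro x y hy
  have h1 : g x < y := lt_of_le_of_lt (le_max_left _ _) hy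
  have h2 : b < y := lt_of_le_of_lt (le_max_right _ _) hy
  filter_upwards [hg x y h1] with z hz
  exact max_lt hz h2

lemma usc_min_const {g : X → ℝ} (hg : UpperSemicontinuous g) (b : ℝ) :
    UpperSemicontinuous fun x => min (g x) b := by
  intro x y hy
  rcases le_or_gt (g x) b with hxb | hxb
  · have h1 : g x < y := by
      have : min (g x) b = g x := min_eq_left hxb
      simpa [this] using hy
    filter_upwards [hg x y h1] with z hz
    exact lt_of_le_of_lt (min_le_left _ _) hz
  · have h1 : b < y := by
      have : min (g x) b = b := min_eq_right hxb.le
      simpa [this] using hy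
    filter_upwards with z
    exact lt_of_le_of_lt (min_le_right _ _) h1

end Semicont

/-! ### Sup-convolution approximation of bounded u.s.c. functions -/

section SupConv

variable {X : Type*} [MetricSpace X] [Nonempty X]

/-- The sup-convolution `x ↦ ⨆ y, (g y - n * dist x y)`. -/
def supConv (g : X → ℝ) (n : ℕ) (x : X) : ℝ := ⨆ y : X, (g y - n * dist x y)

variable {g : X → ℝ} {a R : ℝ} {n : ℕ}

lemma supConv_bddAbove (hR : ∀ y, g y ≤ R) (x : X) :
    BddAbove (range fun y => g y - n * dist x y) := by
  refine ⟨R, ?_⟩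
  rintro _ ⟨y, rfl⟩
  show g y - n * dist x y ≤ R
  have : (0:ℝ) ≤ n * dist x y := by positivity
  linarith [hR y]

lemma supConv_le (hR : ∀ y, g y ≤ R) (x : X) : supConv g n x ≤ R := by
  refine ciSup_le fun y => ?_
  have : (0:ℝ) ≤ n * dist x y := by positivity
  linarith [hR y]

lemma le_supConv (hR : ∀ y, g y ≤ R) (x : X) : g x ≤ supConv g n x := by
  have := le_ciSup (supConv_bddAbove (n := n) hR x) x
  simpa [supConv] using this

lemma supConv_lipschitz_aux (hR : ∀ y, g y ≤ R) (x z : X) :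
    supConv g n x ≤ supConv g n z + n * dist x z := by
  refine ciSup_le fun y => ?_
  have h1 : dist z y ≤ dist z x + dist x y := dist_triangle z x y
  have h2 : g y - n * dist z y ≤ supConv g n z := le_ciSup (supConv_bddAbove hR z) y
  have h3 : g y - n * dist x y ≤ g y - n * dist z y + n * dist x z := by
    have : (n:ℝ) * dist z y ≤ n * dist z x + n * dist x y := by
      rw [← mul_add]; exact mul_le_mul_of_nonneg_left h1 (by positivity)
    rw [dist_comm z x] at this
    linarith
  linarith

lemma supConv_continuous (hR : ∀ y, g y ≤ R) : Continuous (supConv g n) := by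
  refine (LipschitzWith.of_dist_le_mul (K := n) fun x z => ?_).continuous
  rw [Real.dist_eq, abs_sub_le_iff]
  constructor
  · have := supConv_lipschitz_aux (n := n) hR x z
    push_cast
    linarith
  · have := supConv_lipschitz_aux (n := n) hR z x
    rw [dist_comm z x] at this
    push_cast
    linarith

lemma supConv_tendsto (hg : UpperSemicontinuous g) (ha : ∀ y, a ≤ g y) (hR : ∀ y, g y ≤ R)
    (x : X) : Tendsto (fun n => supConv g n x) atTop (𝓝 (g x)) := by
  rw [Metric.tendsto_atTop]
  intro ε hε
  have husc := hg x (g x + ε / 2) (by linarith)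
  rw [Metric.eventually_nhds_iff] at husc
  obtain ⟨δ, hδ, hball⟩ := husc
  obtain ⟨N, hN⟩ := exists_nat_ge ((R - a) / δ)
  refine ⟨N, fun n hn => ?_⟩
  have hub : supConv g n x ≤ g x + ε / 2 := by
    refine ciSup_le fun y => ?_
    rcases lt_or_ge (dist y x) δ with hy | hy
    · have := hball hy
      have h0 : (0:ℝ) ≤ n * dist x y := by positivity
      linarith
    · have h1 : (R - a) ≤ N * δ := by
        rw [div_le_iff₀ hδ] at hN
        linarith
    -- n * dist x y ≥ N * δ
      have h2 : (N:ℝ) * δ ≤ n * dist x y := by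
        have hn' : (N:ℝ) ≤ n := by exact_mod_cast hn
        rw [dist_comm x y]
        calc (N:ℝ) * δ ≤ n * δ := by nlinarith
        _ ≤ n * dist y x := by
            have : (0:ℝ) ≤ (n:ℝ) := by positivity
            nlinarith
      have := ha x
      linarith [hR y]
  have hlb : g x ≤ supConv g n x := le_supConv hR x
  rw [Real.dist_eq, abs_sub_lt_iff]
  constructor <;> linarith

end SupConv

section IntegralApprox

variable {X : Type*} [MetricSpace X] [Nonempty X] [MeasurableSpace X] [OpensMeasurableSpace X]

lemma supConv_integral_tendsto {μ : Measure X} [IsFiniteMeasure μ] {g : X → ℝ} {a R : ℝ}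
    (hg : UpperSemicontinuous g) (ha : ∀ y, a ≤ g y) (hR : ∀ y, g y ≤ R) :
    Tendsto (fun n => ∫ x, supConv g n x ∂μ) atTop (𝓝 (∫ x, g x ∂μ)) := by
  refine tendsto_integral_of_dominated_convergence (fun _ => max |a| |R|) ?_ ?_ ?_ ?_
  · intro n; exact (supConv_continuous hR).aestronglyMeasurable
  · exact integrable_const _
  · intro n
    filter_upwards with x
    rw [Real.norm_eq_abs, abs_le]
    constructor
    · have h1 := (ha x).trans (le_supConv (n := n) hR x)
      have h2 := neg_abs_le a
      have h3 := le_max_left |a| |R|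
      linarith
    · have h1 := supConv_le (n := n) hR x
      have h2 := le_abs_self R
      have h3 := le_max_right |a| |R|
      linarith
  · filter_upwards with x
    exact supConv_tendsto hg ha hR x

end IntegralApprox

/-! ### Integrability helpers and the `ψ`-weak topology on `Pw E ψ` -/

section PwAux

variable {E : Type*} [MeasurableSpace E] [TopologicalSpace E] [OpensMeasurableSpace E] {ψ : E → ℝ}

lemma integrable_psi_of_ne_top (hψc : Continuous ψ) (hψ0 : ∀ x, 0 ≤ ψ x) {m : Measure E}
    (hm : ∫⁻ x, ENNReal.ofReal (ψ x) ∂m ≠ ⊤) : Integrable ψ m := by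
  refine ⟨hψc.aestronglyMeasurable, ?_⟩
  rw [hasFiniteIntegral_iff_norm]
  have : ∀ x, ENNReal.ofReal ‖ψ x‖ = ENNReal.ofReal (ψ x) := by
    intro x; rw [Real.norm_eq_abs, abs_of_nonneg (hψ0 x)]
  rw [lintegral_congr this]
  exact hm.lt_top

lemma integrable_of_growth (hψc : Continuous ψ) (hψ0 : ∀ x, 0 ≤ ψ x) {m : Measure E}
    [IsFiniteMeasure m] (hm : ∫⁻ x, ENNReal.ofReal (ψ x) ∂m ≠ ⊤) {g : E → ℝ}
    (hmeas : AEStronglyMeasurable g m) {K : ℝ} (hb : ∀ x, |g x| ≤ K * (1 + ψ x)) :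
    Integrable g m := by
  have hψ : Integrable ψ m := integrable_psi_of_ne_top hψc hψ0 hm
  have hd : Integrable (fun x => K * (1 + ψ x)) m :=
    (((integrable_const (1:ℝ)).add hψ).const_mul K)
  refine hd.mono hmeas ?_
  filter_upwards with x
  rw [Real.norm_eq_abs, Real.norm_eq_abs]
  exact (hb x).trans (le_abs_self _)

lemma pw_lintegral_ne_top (ν : Pw E ψ) :
    ∫⁻ x, ENNReal.ofReal (ψ x) ∂(ν.toProb : Measure E) ≠ ⊤ := ν.2

lemma continuous_pw_integral_base {h : E → ℝ} (hcont : Continuous h)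
    (hb : ∀ x, |h x| ≤ 1 + ψ x) :
    Continuous fun ν : Pw E ψ => ∫ x, h x ∂(ν.toProb : Measure E) := by
  rw [continuous_iff_le_induced]
  exact iInf_le_of_le h (iInf_le_of_le hcont (iInf_le _ hb))

lemma continuous_pw_integral (hψ0 : ∀ x, 0 ≤ ψ x) {h : E → ℝ} (hcont : Continuous h)
    {K : ℝ} (hb : ∀ x, |h x| ≤ K * (1 + ψ x)) :
    Continuous fun ν : Pw E ψ => ∫ x, h x ∂(ν.toProb : Measure E) := by
  set K' : ℝ := max K 1 with hK'def
  have hK' : 0 < K' := lt_of_lt_of_le one_pos (le_max_right _ _)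
  have hb' : ∀ x, |h x / K'| ≤ 1 + ψ x := by
    intro x
    rw [abs_div, abs_of_pos hK', div_le_iff₀ hK']
    have h1 : 1 + ψ x ≥ 1 := by linarith [hψ0 x]
    calc |h x| ≤ K * (1 + ψ x) := hb x
      _ ≤ K' * (1 + ψ x) := by
          apply mul_le_mul_of_nonneg_right (le_max_left _ _) (by linarith)
      _ = (1 + ψ x) * K' := by ring
  have base := continuous_pw_integral_base (ψ := ψ) (hcont.div_const K') hb'
  have heq : (fun ν : Pw E ψ => ∫ x, h x ∂(ν.toProb : Measure E))
      = fun ν : Pw E ψ => K' * ∫ x, h x / K' ∂(ν.toProb : Measure E) := by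
    funext ν
    rw [← integral_const_mul]
    congr 1
    funext x
    field_simp
  rw [heq]
  exact continuous_const.mul base

lemma continuous_pw_toProb (hψ0 : ∀ x, 0 ≤ ψ x) :
    Continuous (Pw.toProb : Pw E ψ → ProbabilityMeasure E) := by
  rw [continuous_iff_continuousAt]
  intro ν
  rw [ContinuousAt, ProbabilityMeasure.tendsto_iff_forall_integral_tendsto]
  intro h
  have hb : ∀ x, |h x| ≤ (max ‖h‖ 1) * (1 + ψ x) := by
    intro x
    have h1 : |h x| ≤ ‖h‖ := by
      rw [← Real.norm_eq_abs]; exact h.norm_coe_le_norm x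
    have h2 : (1:ℝ) ≤ 1 + ψ x := by linarith [hψ0 x]
    have h3 : (0:ℝ) ≤ max ‖h‖ 1 := le_trans zero_le_one (le_max_right _ _)
    calc |h x| ≤ max ‖h‖ 1 := h1.trans (le_max_left _ _)
      _ = max ‖h‖ 1 * 1 := by ring
      _ ≤ max ‖h‖ 1 * (1 + ψ x) := by nlinarith
  exact (continuous_pw_integral hψ0 h.continuous hb).tendsto ν

end PwAux

/-! ### The closed constraint sets -/

section SsetSection

variable {E : Type*} [MeasurableSpace E] [TopologicalSpace E] [PolishSpace E] [BorelSpace E]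
  [Nonempty E]
variable (α : ProbabilityMeasure E → EReal) (ψ : E → ℝ)

lemma isClosed_levelSet
    (hcompact : ∀ c : ℝ, IsCompact {ν : ProbabilityMeasure E | α ν ≤ (c : EReal)}) (q : ℝ) :
    IsClosed {ν : ProbabilityMeasure E | α ν ≤ (q : EReal)} :=
  (hcompact q).isClosed

lemma isClosed_constraint
    (hcompact : ∀ c : ℝ, IsCompact {ν : ProbabilityMeasure E | α ν ≤ (c : EReal)})
    (hψ0 : ∀ x, 0 ≤ ψ x) {φ : Pw E ψ → ℝ} (hφ : Continuous φ) (r : ℝ) :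
    IsClosed {ν : Pw E ψ | (r : EReal) ≤ ((φ ν : ℝ) : EReal) - α ν.toProb} := by
  rw [← isOpen_compl_iff, isOpen_iff_forall_mem_open]
  intro ν₀ h₀
  simp only [mem_compl_iff, mem_setOf_eq, not_le] at h₀
  have hbot₀ : α ν₀.toProb ≠ ⊥ := by
    intro hb
    rw [hb, EReal.coe_sub_bot] at h₀
    exact not_top_lt h₀
  obtain ⟨q, hq1, hq2⟩ : ∃ q : ℝ, (φ ν₀ - r : ℝ) < q ∧ (q : EReal) < α ν₀.toProb := by
    rcases eq_or_ne (α ν₀.toProb) ⊤ with ht | ht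
    · exact ⟨φ ν₀ - r + 1, by linarith, by rw [ht]; exact EReal.coe_lt_top _⟩
    · have hre : α ν₀.toProb = (((α ν₀.toProb).toReal : ℝ) : EReal) :=
        (EReal.coe_toReal ht hbot₀).symm
      set aa := (α ν₀.toProb).toReal with haa
      have hlt : φ ν₀ - aa < r := by
        rw [hre, ← EReal.coe_sub, EReal.coe_lt_coe_iff] at h₀
        linarith
      refine ⟨(φ ν₀ - r + aa) / 2, by linarith, ?_⟩
      rw [hre, EReal.coe_lt_coe_iff]
      linarith
  refine ⟨{ν : Pw E ψ | (q : EReal) < α ν.toProb} ∩ {ν | φ ν < q + r}, ?_, ?_, ?_⟩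
  · rintro ν ⟨hν1, hν2⟩
    simp only [mem_compl_iff, mem_setOf_eq, not_le]
    calc ((φ ν : ℝ) : EReal) - α ν.toProb ≤ ((φ ν : ℝ) : EReal) - (q : EReal) :=
          EReal.sub_le_sub le_rfl hν1.le
      _ = ((φ ν - q : ℝ) : EReal) := by rw [EReal.coe_sub]
      _ < (r : EReal) := by
          rw [EReal.coe_lt_coe_iff]
          exact sub_lt_iff_lt_add.2 (by linarith [mem_setOf_eq ▸ hν2])
  · apply IsOpen.inter
    · have hpre : {ν : Pw E ψ | (q : EReal) < α ν.toProb}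
          = (Pw.toProb) ⁻¹' {νp : ProbabilityMeasure E | (q : EReal) < α νp} := rfl
      rw [hpre]
      apply (continuous_pw_toProb hψ0).isOpen_preimage
      have hcompl : {νp : ProbabilityMeasure E | (q : EReal) < α νp}
          = {νp : ProbabilityMeasure E | α νp ≤ (q : EReal)}ᶜ := by
        ext νp; simp [not_le]
      rw [hcompl]
      exact (isClosed_levelSet α hcompact q).isOpen_compl
    · exact isOpen_lt hφ continuous_const
  · exact ⟨hq2, by simp only [mem_setOf_eq]; linarith⟩

/-- The family of continuous functions dominating `g` with `ψ`-growth. -/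
def admissible (g : E → ℝ) : Set (E → ℝ) :=
  {h | Continuous h ∧ (∀ x, g x ≤ h x) ∧ ∃ K : ℝ, ∀ x, |h x| ≤ K * (1 + ψ x)}

/-- The constraint set `{ν : ρ-type inequality holds for all continuous majorants of g}`. -/
def Sset (r : ℝ) (g : E → ℝ) : Set (Pw E ψ) :=
  ⋂ h ∈ admissible ψ g,
    {ν : Pw E ψ | (r : EReal) ≤ ((∫ x, h x ∂(ν.toProb : Measure E) : ℝ) : EReal) - α ν.toProb}

lemma isClosed_Sset
    (hcompact : ∀ c : ℝ, IsCompact {ν : ProbabilityMeasure E | α ν ≤ (c : EReal)})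
    (hψ0 : ∀ x, 0 ≤ ψ x) (r : ℝ) (g : E → ℝ) : IsClosed (Sset α ψ r g) := by
  refine isClosed_biInter fun h hh => ?_
  obtain ⟨hc, _, K, hK⟩ := hh
  exact isClosed_constraint α ψ hcompact hψ0 (continuous_pw_integral hψ0 hc hK) r

lemma Sset_mono {r : ℝ} {g g' : E → ℝ} (hgg : ∀ x, g x ≤ g' x) :
    Sset α ψ r g ⊆ Sset α ψ r g' := by
  intro ν hν
  refine mem_iInter₂.2 fun h hh => ?_
  exact mem_iInter₂.1 hν h ⟨hh.1, fun x => (hgg x).trans (hh.2.1 x), hh.2.2⟩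

lemma integrable_of_bounded {X : Type*} [MeasurableSpace X] {m : Measure X} [IsFiniteMeasure m]
    {g : X → ℝ} (hm : AEStronglyMeasurable g m) {C : ℝ} (hb : ∀ x, |g x| ≤ C) :
    Integrable g m := by
  refine (integrable_const C).mono hm ?_
  filter_upwards with x
  rw [Real.norm_eq_abs]
  exact (hb x).trans (le_abs_self C)

lemma mem_Sset (hψc : Continuous ψ) (hψ0 : ∀ x, 0 ≤ ψ x) {r : ℝ} {g : E → ℝ} {ν : Pw E ψ}
    (hgint : Integrable g (ν.toProb : Measure E))
    (hr : (r : EReal) ≤ ((∫ x, g x ∂(ν.toProb : Measure E) : ℝ) : EReal) - α ν.toProb) :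
    ν ∈ Sset α ψ r g := by
  refine mem_iInter₂.2 fun h hh => ?_
  obtain ⟨hc, hge, K, hK⟩ := hh
  have hint : Integrable h (ν.toProb : Measure E) :=
    integrable_of_growth hψc hψ0 ν.2 hc.aestronglyMeasurable hK
  have hmono : ∫ x, g x ∂(ν.toProb : Measure E) ≤ ∫ x, h x ∂(ν.toProb : Measure E) :=
    integral_mono hgint hint hge
  exact hr.trans (EReal.sub_le_sub (EReal.coe_le_coe_iff.2 hmono) le_rfl)

lemma le_of_mem_Sset (hbot : ∀ ν, α ν ≠ ⊥) (hψc : Continuous ψ) (hψ0 : ∀ x, 0 ≤ ψ x)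
    {g : E → ℝ} (hg : UpperSemicontinuous g) {a cg : ℝ} (hcg : 0 ≤ cg)
    (hga : ∀ x, a ≤ g x) (hgle : ∀ x, g x ≤ cg * (1 + ψ x))
    {r : ℝ} {ν : Pw E ψ} (hmem : ν ∈ Sset α ψ r g) :
    (r : EReal) ≤ ((∫ x, g x ∂(ν.toProb : Measure E) : ℝ) : EReal) - α ν.toProb := by
  letI := TopologicalSpace.upgradeIsCompletelyMetrizable E
  classical
  have hμinst : IsProbabilityMeasure (ν.toProb : Measure E) := ν.toProb.2
  have hmem' : ∀ h ∈ admissible ψ g,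
      (r : EReal) ≤ ((∫ x, h x ∂(ν.toProb : Measure E) : ℝ) : EReal) - α ν.toProb :=
    fun h hh => mem_iInter₂.1 hmem h hh
  have hψint : Integrable ψ (ν.toProb : Measure E) := integrable_psi_of_ne_top hψc hψ0 ν.2
  have h1ψ : ∀ x, (1:ℝ) ≤ 1 + ψ x := fun x => by linarith [hψ0 x]
  have hcgψ : ∀ x, (0:ℝ) ≤ cg * (1 + ψ x) := fun x => mul_nonneg hcg (by linarith [hψ0 x])
  have h0ad : (fun x => cg * (1 + ψ x)) ∈ admissible ψ g := by
    refine ⟨continuous_const.mul (continuous_const.add hψc), hgle, cg, fun x => ?_⟩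
    rw [abs_of_nonneg (hcgψ x)]
  have hne : α ν.toProb ≠ ⊤ := by
    intro ht
    have h1 := hmem' _ h0ad
    rw [ht, EReal.sub_top, le_bot_iff] at h1
    exact EReal.coe_ne_bot r h1
  set aν : ℝ := (α ν.toProb).toReal with haν
  have hαeq : α ν.toProb = (aν : EReal) := (EReal.coe_toReal hne (hbot _)).symm
  have hint_g : Integrable g (ν.toProb : Measure E) := by
    refine integrable_of_growth hψc hψ0 ν.2 hg.measurable.aestronglyMeasurable
      (K := |a| + cg) fun x => ?_
    rw [abs_le]
    constructor
    · have h1 := hga x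
      have h2 := neg_abs_le a
      have h3 : |a| ≤ |a| * (1 + ψ x) := le_mul_of_one_le_right (abs_nonneg a) (h1ψ x)
      nlinarith [hcgψ x]
    · have h3 : cg * (1 + ψ x) ≤ (|a| + cg) * (1 + ψ x) := by
        apply mul_le_mul_of_nonneg_right (by linarith [abs_nonneg a]) (by linarith [hψ0 x])
      linarith [hgle x]
  suffices hsuff : r + aν ≤ ∫ x, g x ∂(ν.toProb : Measure E) by
    rw [hαeq, ← EReal.coe_sub, EReal.coe_le_coe_iff]
    linarith
  have hint_cgψ : Integrable (fun x => cg * (1 + ψ x)) (ν.toProb : Measure E) :=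
    ((integrable_const (1:ℝ)).add hψint).const_mul cg
  have key : ∀ R : ℕ, r + aν ≤ (∫ x, min (g x) R ∂(ν.toProb : Measure E))
      + ∫ x, max (cg * (1 + ψ x) - R) 0 ∂(ν.toProb : Measure E) := by
    intro R
    set gR : E → ℝ := fun x => min (g x) (R:ℝ) with hgRdef
    set tR : E → ℝ := fun x => max (cg * (1 + ψ x) - R) 0 with htRdef
    have hgRusc : UpperSemicontinuous gR := usc_min_const hg R
    have hgRa : ∀ x, min a (R:ℝ) ≤ gR x := fun x => min_le_min (hga x) le_rfl
    have hgRR : ∀ x, gR x ≤ (R:ℝ) := fun x => min_le_right _ _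
    have htRcont : Continuous tR :=
      ((continuous_const.mul (continuous_const.add hψc)).sub continuous_const).max continuous_const
    have htR0 : ∀ x, 0 ≤ tR x := fun x => le_max_right _ _
    have htRle : ∀ x, tR x ≤ cg * (1 + ψ x) := fun x =>
      max_le (by linarith [Nat.cast_nonneg (α := ℝ) R, hcgψ x]) (hcgψ x)
    have hint_t : Integrable tR (ν.toProb : Measure E) := by
      refine integrable_of_growth hψc hψ0 ν.2 htRcont.aestronglyMeasurable (K := cg) fun x => ?_
      rw [abs_of_nonneg (htR0 x)]
      exact htRle x
    have hstep : ∀ n : ℕ, r + aν ≤ (∫ x, supConv gR n x ∂(ν.toProb : Measure E))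
        + ∫ x, tR x ∂(ν.toProb : Measure E) := by
      intro n
      have hcont : Continuous (fun x => supConv gR n x + tR x) :=
        (supConv_continuous hgRR).add htRcont
      have hge : ∀ x, g x ≤ supConv gR n x + tR x := by
        intro x
        rcases le_or_gt (g x) (R:ℝ) with hx | hx
        · have h1 : gR x = g x := min_eq_left hx
          have h2 : gR x ≤ supConv gR n x := le_supConv hgRR x
          linarith [htR0 x]
        · have h1 : gR x = (R:ℝ) := min_eq_right hx.le
          have h2 : gR x ≤ supConv gR n x := le_supConv hgRR x
          have h3 : tR x = cg * (1 + ψ x) - R := max_eq_left (by linarith [hgle x])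
          linarith [hgle x]
      set C : ℝ := max |min a (R:ℝ)| (R:ℝ) with hCdef
      have hC0 : (0:ℝ) ≤ C := le_trans (abs_nonneg _) (le_max_left _ _)
      have hsabs : ∀ x, |supConv gR n x| ≤ C := by
        intro x
        have hs1 : min a (R:ℝ) ≤ supConv gR n x := (hgRa x).trans (le_supConv hgRR x)
        have hs2 : supConv gR n x ≤ (R:ℝ) := supConv_le hgRR x
        rw [abs_le]
        constructor
        · have := neg_abs_le (min a (R:ℝ))
          have := le_max_left |min a (R:ℝ)| (R:ℝ)
          linarith
        · exact hs2.trans (le_max_right _ _)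
      have hKb : ∀ x, |supConv gR n x + tR x| ≤ (C + cg) * (1 + ψ x) := by
        intro x
        calc |supConv gR n x + tR x| ≤ |supConv gR n x| + |tR x| := abs_add_le _ _
          _ ≤ C + cg * (1 + ψ x) := by
              refine add_le_add (hsabs x) ?_
              rw [abs_of_nonneg (htR0 x)]
              exact htRle x
          _ ≤ C * (1 + ψ x) + cg * (1 + ψ x) := by nlinarith [h1ψ x]
          _ = (C + cg) * (1 + ψ x) := by ring
      have had : (fun x => supConv gR n x + tR x) ∈ admissible ψ g := ⟨hcont, hge, _, hKb⟩
      have h1 := hmem' _ had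
      rw [hαeq, ← EReal.coe_sub, EReal.coe_le_coe_iff] at h1
      have hint_s : Integrable (fun x => supConv gR n x) (ν.toProb : Measure E) :=
        integrable_of_bounded (supConv_continuous hgRR).aestronglyMeasurable hsabs
      rw [integral_add hint_s hint_t] at h1
      linarith
    have hlim := supConv_integral_tendsto (μ := (ν.toProb : Measure E)) hgRusc hgRa hgRR
    have hsum : Tendsto (fun n => (∫ x, supConv gR n x ∂(ν.toProb : Measure E))
        + ∫ x, tR x ∂(ν.toProb : Measure E)) atTop
        (𝓝 ((∫ x, gR x ∂(ν.toProb : Measure E)) + ∫ x, tR x ∂(ν.toProb : Measure E))) :=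
      hlim.add tendsto_const_nhds
    exact ge_of_tendsto' hsum hstep
  have hlim1 : Tendsto (fun R : ℕ => ∫ x, min (g x) R ∂(ν.toProb : Measure E)) atTop
      (𝓝 (∫ x, g x ∂(ν.toProb : Measure E))) := by
    refine tendsto_integral_of_dominated_convergence (fun x => |g x| + |a|) ?_ ?_ ?_ ?_
    · intro R
      exact (hg.measurable.min measurable_const).aestronglyMeasurable
    · exact hint_g.abs.add (integrable_const _)
    · intro R
      filter_upwards with x
      rw [Real.norm_eq_abs, abs_le]
      constructor
      · have h1 : -|a| ≤ min a (R:ℝ) :=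
          le_min (neg_abs_le a) (le_trans (by linarith [abs_nonneg a]) (Nat.cast_nonneg R))
        have h2 : min a (R:ℝ) ≤ min (g x) R := min_le_min (hga x) le_rfl
        linarith [abs_nonneg (g x)]
      · have := (min_le_left (g x) (R:ℝ)).trans (le_abs_self (g x))
        linarith [abs_nonneg a]
    · filter_upwards with x
      apply tendsto_atTop_of_eventually_const (i₀ := ⌈g x⌉₊)
      intro i hi
      exact min_eq_left ((Nat.le_ceil (g x)).trans (by exact_mod_cast hi))
  have hlim2 : Tendsto (fun R : ℕ => ∫ x, max (cg * (1 + ψ x) - R) 0 ∂(ν.toProb : Measure E))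
      atTop (𝓝 0) := by
    have h0 : Tendsto (fun R : ℕ => ∫ x, max (cg * (1 + ψ x) - R) 0 ∂(ν.toProb : Measure E))
        atTop (𝓝 (∫ x, (0:ℝ) ∂(ν.toProb : Measure E))) := by
      refine tendsto_integral_of_dominated_convergence (fun x => cg * (1 + ψ x)) ?_ ?_ ?_ ?_
      · intro R
        exact (((continuous_const.mul (continuous_const.add hψc)).sub
          continuous_const).max continuous_const).aestronglyMeasurable
      · exact hint_cgψ
      · intro R
        filter_upwards with x
        rw [Real.norm_eq_abs, abs_of_nonneg (le_max_right _ _)]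
        exact max_le (by linarith [Nat.cast_nonneg (α := ℝ) R, hcgψ x]) (hcgψ x)
      · filter_upwards with x
        apply tendsto_atTop_of_eventually_const (i₀ := ⌈cg * (1 + ψ x)⌉₊)
        intro i hi
        apply max_eq_right
        have := (Nat.le_ceil (cg * (1 + ψ x))).trans
          (by exact_mod_cast hi : (⌈cg * (1 + ψ x)⌉₊:ℝ) ≤ i)
        linarith
    simpa using h0
  have hfin := hlim1.add hlim2
  rw [add_zero] at hfin
  exact ge_of_tendsto' hfin key

end SsetSection

/-! ### Lower bound, uniform integrability and the global growth bound -/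

section BoundSection

variable {E : Type*} [MeasurableSpace E] [TopologicalSpace E] [PolishSpace E] [BorelSpace E]
  [Nonempty E]
variable (α : ProbabilityMeasure E → EReal) (ψ : E → ℝ)

lemma alpha_bddBelow (hbot : ∀ ν, α ν ≠ ⊥)
    (hcompact : ∀ c : ℝ, IsCompact {ν : ProbabilityMeasure E | α ν ≤ (c : EReal)}) :
    ∃ B : ℝ, 0 ≤ B ∧ ∀ ν : ProbabilityMeasure E, ((-B : ℝ) : EReal) ≤ α ν := by
  by_contra hcon
  push_neg at hcon
  set T : ℕ → Set (ProbabilityMeasure E) :=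
    fun n => {ν : ProbabilityMeasure E | α ν ≤ ((-(n:ℝ) : ℝ) : EReal)} with hT
  have hTmono : ∀ m n : ℕ, m ≤ n → T n ⊆ T m := by
    intro m n hmn ν hν
    refine le_trans hν (EReal.coe_le_coe_iff.2 ?_)
    simp only [neg_le_neg_iff]
    exact_mod_cast hmn
  have hne : ∀ n : ℕ, (T n).Nonempty := by
    intro n
    obtain ⟨ν, hν⟩ := hcon (n : ℝ) (Nat.cast_nonneg n)
    exact ⟨ν, hν.le⟩
  have hdir : Directed (· ⊇ ·) T := fun m n =>
    ⟨max m n, hTmono m _ (le_max_left _ _), hTmono n _ (le_max_right _ _)⟩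
  obtain ⟨ν', hν'⟩ := IsCompact.nonempty_iInter_of_directed_nonempty_isCompact_isClosed
    T hdir hne (fun n => hcompact _) (fun n => isClosed_levelSet α hcompact _)
  have hall : ∀ n : ℕ, α ν' ≤ ((-(n:ℝ) : ℝ) : EReal) := fun n => mem_iInter.1 hν' n
  rcases eq_or_ne (α ν') ⊤ with ht | ht
  · have := hall 0
    rw [ht] at this
    simp at this
  · have hre : α ν' = (((α ν').toReal : ℝ) : EReal) := (EReal.coe_toReal ht (hbot ν')).symm
    obtain ⟨n, hn⟩ := exists_nat_gt (-(α ν').toReal)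
    have := hall n
    rw [hre, EReal.coe_le_coe_iff] at this
    linarith

lemma exists_truncation_R (hψc : Continuous ψ) (hψ0 : ∀ x, 0 ≤ ψ x) (M : ℝ)
    (hpreM : IsCompact (closure {ν : Pw E ψ | α ν.toProb ≤ (M : EReal)})) :
    ∃ R : ℕ, ∀ ν : Pw E ψ, α ν.toProb ≤ (M : EReal) →
      ∫ x, (ψ x - min (ψ x) R) ∂(ν.toProb : Measure E) < 1/2 := by
  set u : ℕ → Pw E ψ → ℝ :=
    fun R ν => ∫ x, (ψ x - min (ψ x) R) ∂(ν.toProb : Measure E) with hu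
  have hint : ∀ (R : ℕ) (ν : Pw E ψ),
      Integrable (fun x => ψ x - min (ψ x) R) (ν.toProb : Measure E) := by
    intro R ν
    have h1 : Integrable ψ (ν.toProb : Measure E) := integrable_psi_of_ne_top hψc hψ0 ν.2
    refine h1.sub (integrable_of_bounded
      ((hψc.min continuous_const).aestronglyMeasurable) (C := (R:ℝ)) fun x => ?_)
    rw [abs_of_nonneg (le_min (hψ0 x) (Nat.cast_nonneg R))]
    exact min_le_right _ _
  have hucont : ∀ R : ℕ, Continuous (u R) := by
    intro R
    refine continuous_pw_integral hψ0 (hψc.sub (hψc.min continuous_const)) (K := 1) fun x => ?_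
    have h1 : min (ψ x) (R:ℝ) ≥ 0 := le_min (hψ0 x) (Nat.cast_nonneg R)
    have h2 : min (ψ x) (R:ℝ) ≤ ψ x := min_le_left _ _
    rw [abs_of_nonneg (by linarith)]
    linarith
  have hmono : ∀ R R' : ℕ, R ≤ R' → ∀ ν, u R' ν ≤ u R ν := by
    intro R R' h ν
    refine integral_mono (hint R' ν) (hint R ν) fun x => ?_
    have : min (ψ x) (R:ℝ) ≤ min (ψ x) (R':ℝ) :=
      min_le_min le_rfl (by exact_mod_cast h)
    dsimp only
    linarith
  have hcover : closure {ν : Pw E ψ | α ν.toProb ≤ (M : EReal)}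
      ⊆ ⋃ R : ℕ, {ν : Pw E ψ | u R ν < 1/2} := by
    intro ν _
    have htend : Tendsto (fun R : ℕ => u R ν) atTop (𝓝 0) := by
      have h0 : Tendsto (fun R : ℕ => u R ν) atTop
          (𝓝 (∫ x, (0:ℝ) ∂(ν.toProb : Measure E))) := by
        refine tendsto_integral_of_dominated_convergence (fun x => ψ x) ?_ ?_ ?_ ?_
        · intro R
          exact (hψc.sub (hψc.min continuous_const)).aestronglyMeasurable
        · exact integrable_psi_of_ne_top hψc hψ0 ν.2
        · intro R
          filter_upwards with x
          have h1 : min (ψ x) (R:ℝ) ≥ 0 := le_min (hψ0 x) (Nat.cast_nonneg R)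
          have h2 : min (ψ x) (R:ℝ) ≤ ψ x := min_le_left _ _
          rw [Real.norm_eq_abs, abs_of_nonneg (by linarith)]
          linarith
        · filter_upwards with x
          apply tendsto_atTop_of_eventually_const (i₀ := ⌈ψ x⌉₊)
          intro i hi
          have : min (ψ x) (i:ℝ) = ψ x :=
            min_eq_left ((Nat.le_ceil (ψ x)).trans (by exact_mod_cast hi))
          rw [this, sub_self]
      simpa using h0
    have hev : ∀ᶠ R : ℕ in atTop, u R ν < 1/2 :=
      htend.eventually (gt_mem_nhds (by norm_num : (0:ℝ) < 1/2))
    obtain ⟨R, hR⟩ := hev.exists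
    exact mem_iUnion.2 ⟨R, hR⟩
  obtain ⟨t, ht⟩ := hpreM.elim_finite_subcover (fun R : ℕ => {ν : Pw E ψ | u R ν < 1/2})
    (fun R => isOpen_lt (hucont R) continuous_const) hcover
  refine ⟨t.sup id, fun ν hν => ?_⟩
  have hνC : ν ∈ closure {ν : Pw E ψ | α ν.toProb ≤ (M : EReal)} := subset_closure hν
  obtain ⟨R, hRt, hR⟩ := mem_iUnion₂.1 (ht hνC)
  exact lt_of_le_of_lt (hmono R (t.sup id) (Finset.le_sup (f := id) hRt) ν) hR

set_option maxHeartbeats 2000000 in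
lemma exists_global_bound (hproper : ∃ ν, α ν ≠ ⊤) (hbot : ∀ ν, α ν ≠ ⊥)
    (hconvex : ∀ (μ₁ μ₂ : ProbabilityMeasure E) (t : ℝ≥0), t ≤ 1 →
      extend α ((t : ℝ≥0∞) • (μ₁ : Measure E) + ((1 - t : ℝ≥0) : ℝ≥0∞) • (μ₂ : Measure E))
        ≤ ((t : ℝ) : EReal) * α μ₁ + (((1 - t : ℝ≥0) : ℝ) : EReal) * α μ₂)
    (hcompact : ∀ c : ℝ, IsCompact {ν : ProbabilityMeasure E | α ν ≤ (c : EReal)})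
    (hψc : Continuous ψ) (hψ0 : ∀ x, 0 ≤ ψ x)
    (hpre : (∀ c : ℝ, (∀ ν : ProbabilityMeasure E, α ν ≤ (c : EReal) →
          ∫⁻ x, ENNReal.ofReal (ψ x) ∂(ν : Measure E) ≠ ⊤) ∧
        IsCompact (closure {ν : Pw E (ψ) | α ν.toProb ≤ (c : EReal)})))
    (c : ℝ) (hc : 0 ≤ c) :
    ∃ G : ℝ, ∀ (ν : ProbabilityMeasure E) (aa : ℝ), α ν = (aa : EReal) →
      (c + 1) * (1 + ∫ x, ψ x ∂(ν : Measure E)) - aa ≤ G := by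
  obtain ⟨B, hB0, hB⟩ := alpha_bddBelow α hbot hcompact
  obtain ⟨ν₀, hν₀⟩ := hproper
  set a₀ : ℝ := (α ν₀).toReal with ha₀
  have hαν₀ : α ν₀ = (a₀ : EReal) := (EReal.coe_toReal hν₀ (hbot ν₀)).symm
  have hψν₀ : ∫⁻ x, ENNReal.ofReal (ψ x) ∂(ν₀ : Measure E) ≠ ⊤ :=
    (hpre a₀).1 ν₀ (le_of_eq hαν₀)
  have hψint₀ : Integrable ψ (ν₀ : Measure E) := integrable_psi_of_ne_top hψc hψ0 hψν₀
  set M₁ : ℝ := 2*(c+1) + |a₀| with hM₁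
  obtain ⟨R₀, hR₀⟩ := exists_truncation_R α ψ hψc hψ0 M₁ (hpre M₁).2
  set C₂ : ℝ := 2*(c+1) + |a₀| + B + 1 with hC₂
  have hC₂pos : 0 < C₂ := by positivity
  by_contra hcon
  push_neg at hcon
  set M : ℝ := C₂ * (2*(R₀:ℝ) + 2) + B + 2*(c+1) with hM
  obtain ⟨ν₁, a₁, hα₁, hgt⟩ := hcon M
  have hψν₁ : ∫⁻ x, ENNReal.ofReal (ψ x) ∂(ν₁ : Measure E) ≠ ⊤ :=
    (hpre a₁).1 ν₁ (le_of_eq hα₁)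
  have hψint₁ : Integrable ψ (ν₁ : Measure E) := integrable_psi_of_ne_top hψc hψ0 hψν₁
  set x₁ : ℝ := ∫ x, ψ x ∂(ν₁ : Measure E) with hx₁
  have hx₁0 : 0 ≤ x₁ := integral_nonneg hψ0
  have ha₁B : -B ≤ a₁ := by
    have := hB ν₁
    rw [hα₁, EReal.coe_le_coe_iff] at this
    exact this
  have hMx : M < (c+1) * (1+x₁) - a₁ := hgt
  have hMpos : 0 < M := by positivity
  have hx₁1 : 1 ≤ x₁ := by nlinarith [Nat.cast_nonneg (α := ℝ) R₀]
  have hx₁pos : 0 < x₁ := by linarith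
  set t : ℝ≥0 := Real.toNNReal (1/x₁) with htdef
  have htco : ((t:ℝ)) = 1/x₁ := Real.coe_toNNReal _ (by positivity)
  have ht1 : t ≤ 1 := by
    rw [← Real.toNNReal_one]
    rw [Real.toNNReal_le_toNNReal_iff (by norm_num)]
    rw [div_le_one hx₁pos]
    exact hx₁1
  have htco' : (((1 - t : ℝ≥0)) : ℝ) = 1 - 1/x₁ := by
    rw [NNReal.coe_sub ht1, NNReal.coe_one, htco]
  set mk : Measure E := (t : ℝ≥0∞) • (ν₁ : Measure E) + ((1 - t : ℝ≥0) : ℝ≥0∞) • (ν₀ : Measure E)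
    with hmk
  have hmkprob : IsProbabilityMeasure mk := by
    constructor
    rw [hmk]
    simp only [Measure.add_apply, Measure.smul_apply, smul_eq_mul, measure_univ, mul_one]
    rw [← ENNReal.coe_add, add_tsub_cancel_of_le ht1]
    rfl
  set P : ProbabilityMeasure E := ⟨mk, hmkprob⟩ with hPdef
  have hextP : extend α mk = α P := by rw [extend, dif_pos hmkprob]
  have hconv := hconvex ν₁ ν₀ t ht1
  rw [← hmk, hextP, hα₁, hαν₀] at hconv
  have hαP : α P ≤ (((t:ℝ) * a₁ + ((1-t:ℝ≥0):ℝ) * a₀ : ℝ) : EReal) := by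
    refine hconv.trans (le_of_eq ?_)
    rw [← EReal.coe_mul, ← EReal.coe_mul, ← EReal.coe_add]
  set s : ℝ := (t:ℝ) * a₁ + ((1-t:ℝ≥0):ℝ) * a₀ with hs
  have hαPne : α P ≠ ⊤ := ne_top_of_le_ne_top (EReal.coe_ne_top s) hαP
  set aP : ℝ := (α P).toReal with haP
  have hαPeq : α P = (aP : EReal) := (EReal.coe_toReal hαPne (hbot P)).symm
  have haPs : aP ≤ s := by
    rw [hαPeq, EReal.coe_le_coe_iff] at hαP
    exact hαP
  have haPB : -B ≤ aP := by
    have := hB P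
    rw [hαPeq, EReal.coe_le_coe_iff] at this
    exact this
  -- s is small
  have hsle : s ≤ M₁ - M/x₁ := by
    have h1 : (t:ℝ) * a₁ ≤ (1/x₁) * ((c+1)*(1+x₁) - M) := by
      rw [htco]
      apply mul_le_mul_of_nonneg_left (by linarith) (by positivity)
    have h2 : ((1-t:ℝ≥0):ℝ) * a₀ ≤ |a₀| := by
      rw [htco']
      have h3 : 0 ≤ 1 - 1/x₁ := by
        rw [sub_nonneg, div_le_one hx₁pos]; exact hx₁1
      have h4 : 1 - 1/x₁ ≤ 1 := by
        have : 0 < 1/x₁ := by positivity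
        linarith
      rcases le_or_gt a₀ 0 with h5 | h5
      · nlinarith [abs_nonneg a₀]
      · nlinarith [le_abs_self a₀]
    have h6 : (1/x₁) * ((c+1)*(1+x₁) - M) = (c+1)/x₁ + (c+1) - M/x₁ := by
      field_simp
    have h7 : (c+1)/x₁ ≤ c+1 := by
      rw [div_le_iff₀ hx₁pos]
      nlinarith
    rw [hs, hM₁]
    calc (t:ℝ) * a₁ + ((1-t:ℝ≥0):ℝ) * a₀ ≤ (1/x₁) * ((c+1)*(1+x₁) - M) + |a₀| :=
          add_le_add h1 h2
      _ = (c+1)/x₁ + (c+1) - M/x₁ + |a₀| := by rw [h6]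
      _ ≤ 2*(c+1) + |a₀| - M/x₁ := by linarith
  have hx₁M : 2*(R₀:ℝ) + 2 ≤ x₁ := by
    have h1 : M/x₁ ≤ M₁ + B := by linarith
    have h2 : M ≤ (M₁ + B) * x₁ := by
      rw [div_le_iff₀ hx₁pos] at h1
      linarith
    have h3 : C₂ * (2*(R₀:ℝ) + 2) ≤ M := by
      rw [hM]; nlinarith
    have h4 : (M₁ + B) ≤ C₂ := by rw [hC₂, hM₁]; linarith
    nlinarith [Nat.cast_nonneg (α := ℝ) R₀]
  have hαPM₁ : α P ≤ (M₁ : EReal) := by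
    rw [hαPeq, EReal.coe_le_coe_iff]
    have : 0 < M/x₁ := by positivity
    linarith
  -- P is in Pw
  have hPfin : ∫⁻ x, ENNReal.ofReal (ψ x) ∂((P : ProbabilityMeasure E) : Measure E) ≠ ⊤ := by
    show ∫⁻ x, ENNReal.ofReal (ψ x) ∂mk ≠ ⊤
    rw [hmk, lintegral_add_measure, lintegral_smul_measure, lintegral_smul_measure]
    exact ENNReal.add_ne_top.2 ⟨ENNReal.mul_ne_top ENNReal.coe_ne_top hψν₁,
      ENNReal.mul_ne_top ENNReal.coe_ne_top hψν₀⟩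
  set Pν : Pw E ψ := ⟨P, hPfin⟩ with hPν
  have hR₀P := hR₀ Pν hαPM₁
  -- lower bound for the truncated tail integral of P
  have hintmin : ∀ (m : Measure E), IsFiniteMeasure m → Integrable ψ m →
      Integrable (fun x => ψ x - min (ψ x) R₀) m := by
    intro m hfin hm
    haveI := hfin
    refine hm.sub (integrable_of_bounded
      ((hψc.min continuous_const).aestronglyMeasurable) (C := (R₀:ℝ)) fun x => ?_)
    rw [abs_of_nonneg (le_min (hψ0 x) (Nat.cast_nonneg R₀))]
    exact min_le_right _ _
  have hsplit : ∫ x, (ψ x - min (ψ x) R₀) ∂mk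
      = (t:ℝ) * (∫ x, (ψ x - min (ψ x) R₀) ∂(ν₁ : Measure E))
        + ((1-t:ℝ≥0):ℝ) * ∫ x, (ψ x - min (ψ x) R₀) ∂(ν₀ : Measure E) := by
    rw [hmk, integral_add_measure ((hintmin _ inferInstance hψint₁).smul_measure ENNReal.coe_ne_top)
      ((hintmin _ inferInstance hψint₀).smul_measure ENNReal.coe_ne_top),
      integral_smul_measure, integral_smul_measure]
    rw [ENNReal.coe_toReal, ENNReal.coe_toReal, smul_eq_mul, smul_eq_mul]
  have hminle : ∫ x, min (ψ x) (R₀:ℝ) ∂(ν₁ : Measure E) ≤ (R₀:ℝ) := by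
    have h1 : Integrable (fun x => min (ψ x) (R₀:ℝ)) (ν₁ : Measure E) :=
      integrable_of_bounded ((hψc.min continuous_const).aestronglyMeasurable)
        (C := (R₀:ℝ)) fun x => by
          rw [abs_of_nonneg (le_min (hψ0 x) (Nat.cast_nonneg R₀))]
          exact min_le_right _ _
    calc ∫ x, min (ψ x) (R₀:ℝ) ∂(ν₁ : Measure E) ≤ ∫ _, (R₀:ℝ) ∂(ν₁ : Measure E) :=
          integral_mono h1 (integrable_const _) fun x => min_le_right _ _
      _ = (R₀:ℝ) := by simp
  have hν₁low : x₁ - R₀ ≤ ∫ x, (ψ x - min (ψ x) R₀) ∂(ν₁ : Measure E) := by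
    rw [integral_sub hψint₁ (integrable_of_bounded
      ((hψc.min continuous_const).aestronglyMeasurable) (C := (R₀:ℝ)) fun x => by
        rw [abs_of_nonneg (le_min (hψ0 x) (Nat.cast_nonneg R₀))]
        exact min_le_right _ _)]
    rw [← hx₁]
    linarith
  have hν₀low : 0 ≤ ∫ x, (ψ x - min (ψ x) R₀) ∂(ν₀ : Measure E) :=
    integral_nonneg fun x => by
      have := min_le_left (ψ x) (R₀:ℝ)
      simp only [Pi.zero_apply]
      linarith
  have hfinal : 1/2 ≤ ∫ x, (ψ x - min (ψ x) R₀) ∂mk := by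
    rw [hsplit]
    have h1 : (t:ℝ) * (x₁ - R₀) ≤ (t:ℝ) * ∫ x, (ψ x - min (ψ x) R₀) ∂(ν₁ : Measure E) := by
      apply mul_le_mul_of_nonneg_left hν₁low (by positivity)
    have h2 : 0 ≤ ((1-t:ℝ≥0):ℝ) * ∫ x, (ψ x - min (ψ x) R₀) ∂(ν₀ : Measure E) := by
      apply mul_nonneg (NNReal.coe_nonneg _) hν₀low
    have h3 : 1/2 ≤ (t:ℝ) * (x₁ - R₀) := by
      rw [htco, div_mul_eq_mul_div, le_div_iff₀ hx₁pos, one_mul]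
      linarith
    linarith
  exact absurd hR₀P (not_lt.2 hfinal)

end BoundSection

/-- **Lemma 2.13** (truncation from below): for `f` upper semicontinuous with `f ≤ c(1 + ψ)`,
`ρ(f) = lim_m ρ(f ∨ (−m)) = inf_{m>0} ρ(f ∨ (−m))`. -/
theorem extended_duality_below
    {E : Type*} [MeasurableSpace E] [TopologicalSpace E] [PolishSpace E] [BorelSpace E]
    [Nonempty E]
    (α : ProbabilityMeasure E → EReal)
    (hproper : ∃ ν, α ν ≠ ⊤) (hbot : ∀ ν, α ν ≠ ⊥)
    (hconvex : ∀ (μ₁ μ₂ : ProbabilityMeasure E) (t : ℝ≥0), t ≤ 1 →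
      extend α ((t : ℝ≥0∞) • (μ₁ : Measure E) + ((1 - t : ℝ≥0) : ℝ≥0∞) • (μ₂ : Measure E))
        ≤ ((t : ℝ) : EReal) * α μ₁ + (((1 - t : ℝ≥0) : ℝ) : EReal) * α μ₂)
    (hcompact : ∀ c : ℝ, IsCompact {ν : ProbabilityMeasure E | α ν ≤ (c : EReal)})
    (ψ : E → ℝ) (hψc : Continuous ψ) (hψ0 : ∀ x, 0 ≤ ψ x)
    (hpre : (∀ c : ℝ, (∀ ν : ProbabilityMeasure E, α ν ≤ (c : EReal) →
          ∫⁻ x, ENNReal.ofReal (ψ x) ∂(ν : Measure E) ≠ ⊤) ∧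
        IsCompact (closure {ν : Pw E (ψ) | α ν.toProb ≤ (c : EReal)})))
    (f : E → ℝ) (hfusc : UpperSemicontinuous f)
    (c : ℝ) (hc : 0 ≤ c) (hfle : ∀ x, f x ≤ c * (1 + ψ x)) :
    Filter.Tendsto (fun m : ℝ => rhoE α fun x => ((max (f x) (-m) : ℝ) : EReal)) Filter.atTop
      (𝓝 (rhoE α fun x => ((f x : ℝ) : EReal))) ∧
    (rhoE α fun x => ((f x : ℝ) : EReal)) =
      ⨅ (m : ℝ) (_ : 0 < m), rhoE α fun x => ((max (f x) (-m) : ℝ) : EReal) := by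
  classical
  set ρm : ℝ → EReal := fun m => rhoE α (fun x => ((max (f x) (-m) : ℝ) : EReal)) with hρm
  have hanti : Antitone ρm := by
    intro m m' hmm'
    exact rhoE_coe_mono α fun x => max_le_max le_rfl (neg_le_neg hmm')
  have hlb : ∀ m : ℝ, rhoE α (fun x => ((f x : ℝ) : EReal)) ≤ ρm m := fun m =>
    rhoE_coe_mono α fun x => le_max_left _ _
  have hard : ∀ r : ℝ, (∀ m : ℝ, 0 < m → (r : EReal) < ρm m) →
      (r : EReal) ≤ rhoE α (fun x => ((f x : ℝ) : EReal)) := by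
    intro r hr
    obtain ⟨G, hG⟩ := exists_global_bound α ψ hproper hbot hconvex hcompact hψc hψ0 hpre c hc
    set M₀ : ℝ := max (c * (G - r) - r) 0 with hM₀
    have hsel : ∀ n : ℕ, ∃ ν : Pw E ψ, ν ∈ Sset α ψ r (fun x => max (f x) (-((n:ℝ)+1)))
        ∧ α ν.toProb ≤ (M₀ : EReal) := by
      intro n
      have hm : (0:ℝ) < (n:ℝ)+1 := by positivity
      have hrn := hr ((n:ℝ)+1) hm
      rw [hρm] at hrn
      simp only [rhoE] at hrn
      obtain ⟨ν, hν⟩ := lt_iSup_iff.1 hrn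
      have hαnetop : α ν ≠ ⊤ := by
        intro ht
        rw [ht, EReal.sub_top] at hν
        exact not_lt_bot hν
      set aa : ℝ := (α ν).toReal with haa
      have hαeq : α ν = (aa : EReal) := (EReal.coe_toReal hαnetop (hbot ν)).symm
      have hψfin : ∫⁻ x, ENNReal.ofReal (ψ x) ∂(ν : Measure E) ≠ ⊤ :=
        (hpre aa).1 ν (le_of_eq hαeq)
      have hψint : Integrable ψ (ν : Measure E) := integrable_psi_of_ne_top hψc hψ0 hψfin
      have hgusc : UpperSemicontinuous (fun x => max (f x) (-((n:ℝ)+1))) :=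
        usc_max_const hfusc _
      have hcψ0 : ∀ x, (0:ℝ) ≤ c * (1 + ψ x) := fun x =>
        mul_nonneg hc (by linarith [hψ0 x])
      have hgle : ∀ x, max (f x) (-((n:ℝ)+1)) ≤ c * (1 + ψ x) := fun x =>
        max_le (hfle x) (by linarith [hcψ0 x])
      have hgb : ∀ x, |max (f x) (-((n:ℝ)+1))| ≤ ((n:ℝ)+1+c) * (1 + ψ x) := by
        intro x
        have h1 : (1:ℝ) ≤ 1 + ψ x := by linarith [hψ0 x]
        rw [abs_le]
        constructor
        · have h2 : -((n:ℝ)+1) ≤ max (f x) (-((n:ℝ)+1)) := le_max_right _ _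
          have h3 : ((n:ℝ)+1) ≤ ((n:ℝ)+1+c) * (1 + ψ x) := by nlinarith [Nat.cast_nonneg (α := ℝ) n]
          linarith
        · have h3 : c * (1 + ψ x) ≤ ((n:ℝ)+1+c) * (1 + ψ x) := by
            nlinarith [Nat.cast_nonneg (α := ℝ) n, hψ0 x]
          linarith [hgle x]
      have hgint : Integrable (fun x => max (f x) (-((n:ℝ)+1))) (ν : Measure E) :=
        integrable_of_growth hψc hψ0 hψfin hgusc.measurable.aestronglyMeasurable hgb
      rw [erealIntegral_of_integrable hgint, hαeq, ← EReal.coe_sub, EReal.coe_lt_coe_iff] at hν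
      set X : ℝ := ∫ x, ψ x ∂(ν : Measure E) with hX
      have hintcψ : Integrable (fun x => c * (1 + ψ x)) (ν : Measure E) :=
        ((integrable_const (1:ℝ)).add hψint).const_mul c
      have hIg_le : ∫ x, max (f x) (-((n:ℝ)+1)) ∂(ν : Measure E) ≤ c * (1 + X) := by
        have h1 : ∫ x, max (f x) (-((n:ℝ)+1)) ∂(ν : Measure E)
            ≤ ∫ x, c * (1 + ψ x) ∂(ν : Measure E) := integral_mono hgint hintcψ hgle
        have h2 : ∫ x, c * (1 + ψ x) ∂(ν : Measure E) = c * (1 + X) := by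
          rw [integral_const_mul, integral_add (integrable_const _) hψint]
          simp [hX]
        linarith
      have hGν := hG ν aa hαeq
      rw [← hX] at hGν
      have haar : aa < c * (1 + X) - r := by linarith
      have hψleGr : 1 + X ≤ G - r := by linarith
      have haaM : aa ≤ M₀ := by
        have h1 : c * (1 + X) ≤ c * (G - r) := mul_le_mul_of_nonneg_left hψleGr hc
        rw [hM₀]
        have : aa ≤ c * (G - r) - r := by linarith
        exact this.trans (le_max_left _ _)
      refine ⟨⟨ν, hψfin⟩, ?_, ?_⟩
      · refine mem_Sset α ψ hψc hψ0 hgint ?_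
        show (r : EReal) ≤ ((∫ x, max (f x) (-((n:ℝ)+1)) ∂(ν : Measure E) : ℝ) : EReal) - α ν
        rw [hαeq, ← EReal.coe_sub, EReal.coe_le_coe_iff]
        linarith
      · show α ν ≤ (M₀ : EReal)
        rw [hαeq]
        exact_mod_cast haaM
    choose νsel hνmem hνM using hsel
    have hCcomp : IsCompact (closure {ν : Pw E ψ | α ν.toProb ≤ (M₀ : EReal)}) := (hpre M₀).2
    set K : ℕ → Set (Pw E ψ) := fun n => (Sset α ψ r (fun x => max (f x) (-((n:ℝ)+1))))
      ∩ closure {ν : Pw E ψ | α ν.toProb ≤ (M₀ : EReal)} with hK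
    have hKclosed : ∀ n, IsClosed (K n) := fun n =>
      (isClosed_Sset α ψ hcompact hψ0 _ _).inter isClosed_closure
    have hKcomp : ∀ n, IsCompact (K n) :=
      fun n => hCcomp.of_isClosed_subset (hKclosed n) inter_subset_right
    have hKne : ∀ n, (K n).Nonempty := fun n =>
      ⟨νsel n, hνmem n, subset_closure (hνM n)⟩
    have hKmono : ∀ m n : ℕ, m ≤ n → K n ⊆ K m := by
      intro m n hmn
      apply inter_subset_inter_left
      apply Sset_mono
      intro x
      apply max_le_max le_rfl
      have : ((m:ℝ)+1) ≤ ((n:ℝ)+1) := by exact_mod_cast Nat.succ_le_succ hmn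
      linarith
    have hdir : Directed (· ⊇ ·) K := fun m n =>
      ⟨max m n, hKmono m _ (le_max_left _ _), hKmono n _ (le_max_right _ _)⟩
    obtain ⟨νst, hνst⟩ := IsCompact.nonempty_iInter_of_directed_nonempty_isCompact_isClosed
      K hdir hKne hKcomp hKclosed
    have hmemall : ∀ n : ℕ, (r : EReal) ≤
        ((∫ x, max (f x) (-((n:ℝ)+1)) ∂(νst.toProb : Measure E) : ℝ) : EReal) - α νst.toProb := by
      intro n
      have hmem := (mem_iInter.1 hνst n).1
      refine le_of_mem_Sset α ψ hbot hψc hψ0 (usc_max_const hfusc _) hc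
        (fun x => le_max_right _ _) ?_ hmem
      intro x
      have h0 : (0:ℝ) ≤ c * (1 + ψ x) := mul_nonneg hc (by linarith [hψ0 x])
      exact max_le (hfle x) (by nlinarith [Nat.cast_nonneg (α := ℝ) n])
    have hαne : α νst.toProb ≠ ⊤ := by
      intro ht
      have h0 := hmemall 0
      rw [ht, EReal.sub_top, le_bot_iff] at h0
      exact EReal.coe_ne_bot r h0
    set aν : ℝ := (α νst.toProb).toReal with haν
    have hαeq : α νst.toProb = (aν : EReal) := (EReal.coe_toReal hαne (hbot _)).symm
    have hreal : ∀ n : ℕ, r + aν ≤ ∫ x, max (f x) (-((n:ℝ)+1)) ∂(νst.toProb : Measure E) := by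
      intro n
      have := hmemall n
      rw [hαeq, ← EReal.coe_sub, EReal.coe_le_coe_iff] at this
      linarith
    have hψintst : Integrable ψ (νst.toProb : Measure E) :=
      integrable_psi_of_ne_top hψc hψ0 νst.2
    have hintcψst : Integrable (fun x => c * (1 + ψ x)) (νst.toProb : Measure E) :=
      ((integrable_const (1:ℝ)).add hψintst).const_mul c
    have hfmeas : Measurable f := hfusc.measurable
    -- Integrability of f with respect to νst
    have hPfin : ∫⁻ x, ENNReal.ofReal (f x) ∂(νst.toProb : Measure E) ≠ ⊤ := by
      refine ne_top_of_le_ne_top (lintegral_ofReal_ne_top_of_integrable hintcψst)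
        (lintegral_mono fun x => ENNReal.ofReal_le_ofReal (hfle x))
    have hgnint : ∀ n : ℕ, Integrable (fun x => max (f x) (-((n:ℝ)+1)))
        (νst.toProb : Measure E) := by
      intro n
      have hgusc : UpperSemicontinuous (fun x => max (f x) (-((n:ℝ)+1))) :=
        usc_max_const hfusc _
      refine integrable_of_growth hψc hψ0 νst.2 hgusc.measurable.aestronglyMeasurable
        (K := (n:ℝ)+1+c) fun x => ?_
      have h1 : (1:ℝ) ≤ 1 + ψ x := by linarith [hψ0 x]
      have hcψ0 : (0:ℝ) ≤ c * (1 + ψ x) := mul_nonneg hc (by linarith [hψ0 x])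
      rw [abs_le]
      constructor
      · have h2 : -((n:ℝ)+1) ≤ max (f x) (-((n:ℝ)+1)) := le_max_right _ _
        have h3 : ((n:ℝ)+1) ≤ ((n:ℝ)+1+c) * (1 + ψ x) := by
          nlinarith [Nat.cast_nonneg (α := ℝ) n]
        linarith
      · have h3 : c * (1 + ψ x) ≤ ((n:ℝ)+1+c) * (1 + ψ x) := by
          nlinarith [Nat.cast_nonneg (α := ℝ) n, hψ0 x]
        have := max_le (hfle x) (by linarith [hcψ0] : -((n:ℝ)+1) ≤ c * (1 + ψ x))
        linarith
    have hNfin : ∫⁻ x, ENNReal.ofReal (-(f x)) ∂(νst.toProb : Measure E) ≠ ⊤ := by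
      set Pc : ℝ≥0∞ := ∫⁻ x, ENNReal.ofReal (c * (1 + ψ x)) ∂(νst.toProb : Measure E) with hPc
      have hPcfin : Pc ≠ ⊤ := lintegral_ofReal_ne_top_of_integrable hintcψst
      set D : ℝ := Pc.toReal - (r + aν) with hD
      have hNn : ∀ n : ℕ, ∫⁻ x, ENNReal.ofReal (-(max (f x) (-((n:ℝ)+1))))
          ∂(νst.toProb : Measure E) ≤ ENNReal.ofReal D := by
        intro n
        set Nn := ∫⁻ x, ENNReal.ofReal (-(max (f x) (-((n:ℝ)+1)))) ∂(νst.toProb : Measure E)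
          with hNdef
        have hNntop : Nn ≠ ⊤ := lintegral_ofReal_ne_top_of_integrable (hgnint n).neg
        have hPn : ∫⁻ x, ENNReal.ofReal (max (f x) (-((n:ℝ)+1))) ∂(νst.toProb : Measure E)
            ≤ Pc := by
          refine lintegral_mono fun x => ENNReal.ofReal_le_ofReal ?_
          have h0 : (0:ℝ) ≤ c * (1 + ψ x) := mul_nonneg hc (by linarith [hψ0 x])
          exact max_le (hfle x) (by nlinarith [Nat.cast_nonneg (α := ℝ) n])
        have heq := integral_eq_lintegral_pos_part_sub_lintegral_neg_part (hgnint n)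
        have hle := hreal n
        rw [heq] at hle
        have hPntop : ∫⁻ x, ENNReal.ofReal (max (f x) (-((n:ℝ)+1))) ∂(νst.toProb : Measure E) ≠ ⊤ :=
          ne_top_of_le_ne_top hPcfin hPn
        have h1 : (∫⁻ x, ENNReal.ofReal (max (f x) (-((n:ℝ)+1)))
            ∂(νst.toProb : Measure E)).toReal ≤ Pc.toReal :=
          ENNReal.toReal_mono hPcfin hPn
        have h2 : Nn.toReal ≤ D := by
          rw [hD]
          have : Nn.toReal = (∫⁻ x, ENNReal.ofReal (max (f x) (-((n:ℝ)+1)))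
              ∂(νst.toProb : Measure E)).toReal
              - ∫ x, max (f x) (-((n:ℝ)+1)) ∂(νst.toProb : Measure E) := by
            rw [heq]
            ring
          linarith
        rw [← ENNReal.ofReal_toReal hNntop]
        exact ENNReal.ofReal_le_ofReal h2
      have hsup : ∫⁻ x, ENNReal.ofReal (-(f x)) ∂(νst.toProb : Measure E)
          = ⨆ n : ℕ, ∫⁻ x, ENNReal.ofReal (-(max (f x) (-((n:ℝ)+1))))
            ∂(νst.toProb : Measure E) := by
        rw [← lintegral_iSup]
        · refine lintegral_congr fun x => ?_
          apply le_antisymm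
          · obtain ⟨n, hn⟩ := exists_nat_ge (-(f x))
            refine le_iSup_of_le n (le_of_eq ?_)
            congr 1
            have : -((n:ℝ)+1) ≤ f x := by linarith
            rw [max_eq_left this]
          · refine iSup_le fun n => ENNReal.ofReal_le_ofReal ?_
            simp only [neg_le_neg_iff]
            exact le_max_left _ _
        · intro n
          exact (hfmeas.max measurable_const).neg.ennreal_ofReal
        · intro i j hij x
          refine ENNReal.ofReal_le_ofReal ?_
          simp only [neg_le_neg_iff]
          refine max_le_max le_rfl ?_
          have : ((i:ℝ)+1) ≤ ((j:ℝ)+1) := by exact_mod_cast Nat.succ_le_succ hij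
          linarith
      rw [hsup]
      exact ne_top_of_le_ne_top ENNReal.ofReal_ne_top (iSup_le hNn)
    have hfint : Integrable f (νst.toProb : Measure E) := by
      refine ⟨hfmeas.aestronglyMeasurable, ?_⟩
      rw [hasFiniteIntegral_iff_norm]
      have hb : ∀ x, ENNReal.ofReal ‖f x‖ ≤ ENNReal.ofReal (f x) + ENNReal.ofReal (-(f x)) := by
        intro x
        rcases le_total 0 (f x) with h | h
        · rw [Real.norm_eq_abs, abs_of_nonneg h]
          exact le_add_right le_rfl
        · rw [Real.norm_eq_abs, abs_of_nonpos h]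
          exact le_add_left le_rfl
      calc ∫⁻ x, ENNReal.ofReal ‖f x‖ ∂(νst.toProb : Measure E)
          ≤ ∫⁻ x, (ENNReal.ofReal (f x) + ENNReal.ofReal (-(f x)))
            ∂(νst.toProb : Measure E) := lintegral_mono hb
        _ = (∫⁻ x, ENNReal.ofReal (f x) ∂(νst.toProb : Measure E))
            + ∫⁻ x, ENNReal.ofReal (-(f x)) ∂(νst.toProb : Measure E) :=
            lintegral_add_left hfmeas.ennreal_ofReal _
        _ < ⊤ := ENNReal.add_lt_top.2 ⟨hPfin.lt_top, hNfin.lt_top⟩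
    have htend : Tendsto (fun n : ℕ => ∫ x, max (f x) (-((n:ℝ)+1)) ∂(νst.toProb : Measure E))
        atTop (𝓝 (∫ x, f x ∂(νst.toProb : Measure E))) := by
      refine tendsto_integral_of_dominated_convergence
        (fun x => |f x| + |max (f x) (-(1:ℝ))|) ?_ ?_ ?_ ?_
      · intro n; exact ((hfmeas.max measurable_const)).aestronglyMeasurable
      · exact hfint.abs.add (by
          have h01 : ((0:ℕ):ℝ) + 1 = (1:ℝ) := by norm_num
          have := (hgnint 0).abs
          simpa [h01] using this)
      · intro n
        filter_upwards with x
        rw [Real.norm_eq_abs]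
        have h1 : f x ≤ max (f x) (-((n:ℝ)+1)) := le_max_left _ _
        have h2 : max (f x) (-((n:ℝ)+1)) ≤ max (f x) (-(1:ℝ)) := by
          refine max_le_max le_rfl ?_
          have : (1:ℝ) ≤ (n:ℝ)+1 := by linarith [Nat.cast_nonneg (α := ℝ) n]
          linarith
        have h3 := neg_abs_le (f x)
        have h4 := le_abs_self (max (f x) (-(1:ℝ)))
        rw [abs_le]
        constructor
        · linarith [abs_nonneg (max (f x) (-(1:ℝ)))]
        · linarith [abs_nonneg (f x)]
      · filter_upwards with x
        apply tendsto_atTop_of_eventually_const (i₀ := ⌈-(f x)⌉₊)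
        intro i hi
        apply max_eq_left
        have h1 : -(f x) ≤ (⌈-(f x)⌉₊ : ℝ) := Nat.le_ceil _
        have h2 : ((⌈-(f x)⌉₊ : ℕ) : ℝ) ≤ (i:ℝ) := by exact_mod_cast hi
        linarith
    have hfinal : r + aν ≤ ∫ x, f x ∂(νst.toProb : Measure E) := ge_of_tendsto' htend hreal
    simp only [rhoE]
    refine le_iSup_of_le νst.toProb ?_
    rw [erealIntegral_of_integrable hfint, hαeq, ← EReal.coe_sub, EReal.coe_le_coe_iff]
    linarith
  have heq : rhoE α (fun x => ((f x : ℝ) : EReal)) = ⨅ m : ℝ, ρm m := by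
    refine le_antisymm (le_iInf hlb) ?_
    by_contra hlt
    push_neg at hlt
    obtain ⟨r, hr1, hr2⟩ := EReal.exists_between_coe_real hlt
    have hler := hard r (fun m _ => lt_of_lt_of_le hr2 (iInf_le _ m))
    exact absurd (lt_of_le_of_lt hler hr1) (lt_irrefl _)
  constructor
  · rw [show (rhoE α fun x => ((f x : ℝ) : EReal)) = ⨅ m : ℝ, ρm m from heq]
    exact tendsto_atTop_iInf hanti
  · rw [heq]
    apply le_antisymm
    · exact le_iInf fun m => le_iInf fun _ => iInf_le _ m
    · refine le_iInf fun m => ?_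
      refine le_trans (iInf₂_le (max m 1) (lt_of_lt_of_le one_pos (le_max_right _ _))) ?_
      exact hanti (le_max_left m 1)

end SanovDual
end
end
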